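/- arXiv:2312.01116 — 3 statements merged into one kernel-verified Lean document; each statement's English description precedes it below -/
import Mathlib

section
/- For any k ∈ ℕ∖{0}, the minimum depth of a deterministic decision tree for the table T_k satisfies h^d(T_k) ≥ k − 1. -/
open Classical

noncomputable section

/-- A decision table with many-valued decisions over `E_k = {0,…,k-1}`.
Columns are labeled with attributes `f_i` identified with their indices `i : ℕ`;
a row is a function `ℕ → ℕ` supported on the attribute set, with values `< k`;
each row is labeled with a nonempty finite set of decisions. -/
structure Table (k : ℕ) where
  attrs : Finset ℕ
  rows : Finset (ℕ → ℕ)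
  dec : (ℕ → ℕ) → Finset ℕ
  rows_mem : ∀ r ∈ rows, (∀ i ∈ attrs, r i < k) ∧ (∀ i ∉ attrs, r i = 0)
  dec_nonempty : ∀ r ∈ rows, (dec r).Nonempty

namespace Table

variable {k : ℕ}

/-- a row satisfies a word (a list of (attribute, value) pairs) -/
def rowSat (r : ℕ → ℕ) (α : List (ℕ × ℕ)) : Prop := ∀ q ∈ α, r q.1 = q.2

/-- the word belongs to `Ω_k(T)` -/
def wordOk (T : Table k) (α : List (ℕ × ℕ)) : Prop := ∀ q ∈ α, q.1 ∈ T.attrs ∧ q.2 < k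

/-- the subtable `Tα` -/
def applyWord (T : Table k) (α : List (ℕ × ℕ)) : Table k where
  attrs := T.attrs
  rows := T.rows.filter (fun r => rowSat r α)
  dec := T.dec
  rows_mem := fun r hr => T.rows_mem r (Finset.mem_filter.mp hr).1
  dec_nonempty := fun r hr => T.dec_nonempty r (Finset.mem_filter.mp hr).1

/-- `T ∈ M_k^{∞c}` : the table has a common decision -/
def hasCommon (T : Table k) : Prop := ∃ d : ℕ, ∀ r ∈ T.rows, d ∈ T.dec r

/-- `N(T)` : number of rows -/
def NT (T : Table k) : ℕ := T.rows.card

/-- `W(T)` : number of columns (`0` for the empty table `Λ`) -/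
def WT (T : Table k) : ℕ := if T.rows = ∅ then 0 else T.attrs.card

/-- the closure `[T]` of `T` under removal of columns and changing of decisions:
`Q = J(ν, I(D,T))` for some `D ⊆ At(T)` and some `ν` (the decision labeling of `Q`
on its rows is arbitrary, i.e. is the arbitrary `ν` with nonempty finite values). -/
def closureT (T : Table k) : Set (Table k) :=
  {Q | ∃ D : Finset ℕ, D ⊆ T.attrs ∧ Q.attrs = T.attrs \ D ∧
      Q.rows = T.rows.image (fun r i => if i ∈ T.attrs \ D then r i else 0)}

end Table

/-- a closed class: `[A] = A` -/
def IsClosedClass {k : ℕ} (A : Set (Table k)) : Prop := ∀ T ∈ A, Table.closureT T ⊆ A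

/-- a nontrivial class: contains nonempty tables -/
def NontrivialClass {k : ℕ} (A : Set (Table k)) : Prop := ∃ T ∈ A, T.rows.Nonempty

/-- the part of a `k`-decision tree below one edge leaving the root -/
inductive DTree (k : ℕ) : Type
  | leaf (d : ℕ) : DTree k
  | node (a : ℕ) (n : ℕ) (lab : Fin (n + 1) → ℕ) (ch : Fin (n + 1) → DTree k) : DTree k

namespace DTree

variable {k : ℕ}

/-- the set of pairs (π(τ), terminal decision) over complete paths τ -/
def paths : DTree k → Set (List (ℕ × ℕ) × ℕ)
  | leaf d => {([], d)}
  | node a _ lab ch =>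
      ⋃ i, (fun p : List (ℕ × ℕ) × ℕ => ((a, lab i) :: p.1, p.2)) '' paths (ch i)

/-- edge labels belong to `E_k` -/
def wf : DTree k → Prop
  | leaf _ => True
  | node _ _ lab ch => (∀ i, lab i < k) ∧ ∀ i, wf (ch i)

/-- edges leaving any node are labeled with pairwise different numbers -/
def det : DTree k → Prop
  | leaf _ => True
  | node _ _ lab ch => Function.Injective lab ∧ ∀ i, det (ch i)

/-- the set of attributes attached to nodes -/
def attrs : DTree k → Finset ℕ
  | leaf _ => ∅
  | node a _ _ ch => insert a (Finset.univ.biUnion fun i => attrs (ch i))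

end DTree

/-- a `k`-decision tree: an unlabeled root with `n+1` unlabeled edges leaving it -/
structure KTree (k : ℕ) where
  n : ℕ
  sub : Fin (n + 1) → DTree k

namespace KTree

variable {k : ℕ}

def paths (Γ : KTree k) : Set (List (ℕ × ℕ) × ℕ) := ⋃ i, (Γ.sub i).paths

def wf (Γ : KTree k) : Prop := ∀ i, (Γ.sub i).wf

def attrs (Γ : KTree k) : Finset ℕ := Finset.univ.biUnion fun i => (Γ.sub i).attrs

end KTree

/-- partially bounded complexity measure on words over `P` -/
structure PBCM where
  toFun : List ℕ → ℕ
  pos : ∀ α, toFun α = 0 ↔ α = []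
  perm : ∀ α β, List.Perm α β → toFun α = toFun β
  mono : ∀ α β, toFun α ≤ toFun (α ++ β)
  subadd : ∀ α β, toFun (α ++ β) ≤ toFun α + toFun β

/-- bounded complexity measure -/
structure BCM extends PBCM where
  bdd : ∀ α, α.length ≤ toFun α

/-- extension of ψ to words over pairs `(f_i, δ)` -/
def PBCM.onWord (ψ : PBCM) (α : List (ℕ × ℕ)) : ℕ := ψ.toFun (α.map Prod.fst)

/-- extension of ψ to finite sets of attributes -/
def PBCM.onSet (ψ : PBCM) (s : Finset ℕ) : ℕ := ψ.toFun (s.sort (· ≤ ·))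

/-- the depth `h` -/
def depthCM : BCM where
  toFun := List.length
  pos := fun α => List.length_eq_zero_iff
  perm := fun _ _ h => h.length_eq
  mono := fun α β => by simp
  subadd := fun α β => by simp
  bdd := fun _ => le_rfl

/-- `ψ(Γ)` : complexity of a decision tree -/
def treeComp {k : ℕ} (ψ : PBCM) (Γ : KTree k) : ℕ :=
  sSup {c | ∃ p ∈ Γ.paths, ψ.onWord p.1 = c}

/-- `Γ` is a nondeterministic decision tree for the (nonempty) table `T` -/
def isNDT {k : ℕ} (T : Table k) (Γ : KTree k) : Prop :=
  T.rows.Nonempty ∧ Γ.wf ∧ Γ.attrs ⊆ T.attrs ∧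
  (∀ r ∈ T.rows, ∃ p ∈ Γ.paths, Table.rowSat r p.1) ∧
  (∀ p ∈ Γ.paths, (T.applyWord p.1).rows = ∅ ∨ ∀ r ∈ (T.applyWord p.1).rows, p.2 ∈ T.dec r)

/-- `Γ` is a deterministic decision tree for `T` -/
def isDDT {k : ℕ} (T : Table k) (Γ : KTree k) : Prop :=
  isNDT T Γ ∧ Γ.n = 0 ∧ ∀ i, (Γ.sub i).det

/-- `ψ^a(T)` -/
def psiA {k : ℕ} (ψ : PBCM) (T : Table k) : ℕ :=
  sInf {c | ∃ Γ : KTree k, isNDT T Γ ∧ treeComp ψ Γ = c}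

/-- `ψ^d(T)` -/
def psiD {k : ℕ} (ψ : PBCM) (T : Table k) : ℕ :=
  sInf {c | ∃ Γ : KTree k, isDDT T Γ ∧ treeComp ψ Γ = c}

/-- `m_ψ(T)` -/
def mpsi {k : ℕ} (ψ : PBCM) (T : Table k) : ℕ :=
  if T.rows = ∅ then 0 else T.attrs.sup fun i => ψ.toFun [i]

/-- `W_ψ(T)` -/
def Wpsi {k : ℕ} (ψ : PBCM) (T : Table k) : ℕ :=
  if T.rows = ∅ then 0 else ψ.onSet T.attrs

/-- a tuple `δ̄ ∈ E_k^{|At(T)|}` -/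
def validTuple {k : ℕ} (T : Table k) (δ : ℕ → ℕ) : Prop :=
  (∀ i ∈ T.attrs, δ i < k) ∧ ∀ i ∉ T.attrs, δ i = 0

/-- `M_ψ(T, δ̄)` -/
def MpsiAt {k : ℕ} (ψ : PBCM) (T : Table k) (δ : ℕ → ℕ) : ℕ :=
  sInf {p | ∃ s : Finset ℕ, s ⊆ T.attrs ∧
    (T.applyWord ((s.sort (· ≤ ·)).map fun i => (i, δ i))).hasCommon ∧ ψ.onSet s = p}

/-- `M_ψ(T)` -/
def Mpsi {k : ℕ} (ψ : PBCM) (T : Table k) : ℕ :=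
  if T.hasCommon then 0 else sSup {p | ∃ δ, validTuple T δ ∧ MpsiAt ψ T δ = p}

/-- `U` is a `(ψ,n)`-cover of `T` -/
def isCover {k : ℕ} (ψ : PBCM) (n : ℕ) (T : Table k) (U : Finset (List (ℕ × ℕ))) : Prop :=
  (∀ α ∈ U, T.wordOk α ∧ ψ.onWord α ≤ n) ∧ ∀ r ∈ T.rows, ∃ α ∈ U, Table.rowSat r α

/-- `U` is an irreducible `(ψ,n)`-cover of `T` -/
def isIrredCover {k : ℕ} (ψ : PBCM) (n : ℕ) (T : Table k) (U : Finset (List (ℕ × ℕ))) : Prop :=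
  isCover ψ n T U ∧ ∀ V ⊂ U, ¬ isCover ψ n T V

/-- `l_ψ(T,n)` : maximum cardinality of an irreducible `(ψ,n)`-cover -/
def lpsi {k : ℕ} (ψ : PBCM) (T : Table k) (n : ℕ) : ℕ :=
  sSup {c | ∃ U, isIrredCover ψ n T U ∧ U.card = c}

/-- the set `{ψ^d(T) : T ∈ A, ψ^a(T) ≤ n}`; `H^∞_{ψ,A}(n)` is defined iff this set
is finite, and is then its maximum -/
def HSet {k : ℕ} (ψ : PBCM) (A : Set (Table k)) (n : ℕ) : Set ℕ :=
  {c | ∃ T ∈ A, psiA ψ T ≤ n ∧ psiD ψ T = c}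

/-- `H^∞_{ψ,A}(n)` (as the max = sSup of the finite set `HSet ψ A n`) -/
def Hfun {k : ℕ} (ψ : PBCM) (A : Set (Table k)) (n : ℕ) : ℕ := sSup (HSet ψ A n)

/-- the set `{l_ψ(T,n) : T ∈ A}` -/
def LSet {k : ℕ} (ψ : PBCM) (A : Set (Table k)) (n : ℕ) : Set ℕ :=
  {c | ∃ T ∈ A, lpsi ψ T n = c}

/-- `L_{ψ,A}(n)` -/
def Lfun {k : ℕ} (ψ : PBCM) (A : Set (Table k)) (n : ℕ) : ℕ := sSup (LSet ψ A n)

/-- `H_D` for an infinite `D ⊆ ℕ` : `H_D(n)` is the largest element of `D` that is `≤ n`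
(and `0` if there is none) -/
def HDfun (D : Set ℕ) (n : ℕ) : ℕ := sSup {d | d ∈ D ∧ d ≤ n}

/-- a complete table from `M_2^∞` -/
def isComplete (Q : Table 2) : Prop := Q.NT = 2 ^ Q.attrs.card

/-- `Z(T)` : maximum number of columns in a complete table from `[T]` (`0` if none) -/
def Zt (T : Table 2) : ℕ := sSup {c | ∃ Q ∈ Table.closureT T, isComplete Q ∧ Q.WT = c}

/-- the set `{Z(T) : T ∈ A_ψ(n)}` -/
def ZSet (ψ : PBCM) (A : Set (Table 2)) (n : ℕ) : Set ℕ :=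
  {c | ∃ T ∈ A, mpsi ψ T ≤ n ∧ Zt T = c}

/-- `Z_{ψ,A}(n)` -/
def Zfun (ψ : PBCM) (A : Set (Table 2)) (n : ℕ) : ℕ := sSup (ZSet ψ A n)

/-- annihilating word for `T` -/
def isAnnih (T : Table 2) (α : List (ℕ × ℕ)) : Prop :=
  T.wordOk α ∧ (∀ p ∈ α, ∀ q ∈ α, p.1 = q.1 → p.2 = q.2) ∧ (T.applyWord α).rows = ∅

/-- irreducible annihilating word for `T` -/
def isIrredAnnih (T : Table 2) (α : List (ℕ × ℕ)) : Prop :=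
  isAnnih T α ∧ ∀ β, β.Sublist α → β ≠ α → ¬ isAnnih T β

/-- `G(T)` : maximum length of an irreducible annihilating word (`0` if none) -/
def Gt (T : Table 2) : ℕ := sSup {c | ∃ α, isIrredAnnih T α ∧ α.length = c}

/-- the set `{G(T) : T ∈ A_ψ(n)}` -/
def GSet (ψ : PBCM) (A : Set (Table 2)) (n : ℕ) : Set ℕ :=
  {c | ∃ T ∈ A, mpsi ψ T ≤ n ∧ Gt T = c}

/-- `G_{ψ,A}(n)` -/
def Gfun (ψ : PBCM) (A : Set (Table 2)) (n : ℕ) : ℕ := sSup (GSet ψ A n)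

/-! ### The tables `T_k` and `T_k^*` built from the triangle-shaped graph `G_k` -/

/-- `m(k) = k(k+1)/2` : number of nodes of `G_k` -/
def mnum (k : ℕ) : ℕ := k * (k + 1) / 2

/-- the layer of node `i` of `G_k` : the unique `L` with `m(L-1) < i ≤ m(L)` -/
def layer (i : ℕ) : ℕ := sInf {L | i ≤ mnum L}

/-- left child `l(i) = i + layer i`; right child `p(i) = i + layer i + 1` -/
def lchild (i : ℕ) : ℕ := i + layer i

def rchild (i : ℕ) : ℕ := i + layer i + 1

/-- the map `ν_k : E_2^{m(k)} → P(ω)` -/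
def nuk (k : ℕ) (δ : ℕ → ℕ) : Finset ℕ :=
  (Finset.range (mnum k + 1)).filter fun i =>
    if i = 0 then δ 1 = 0
    else if layer i = k then δ i = 1
    else δ i = 1 ∧ δ (lchild i) = 0 ∧ δ (rchild i) = 0

/-- all tuples over `E_k` supported on the attribute set `s` -/
def allRows (k : ℕ) (s : Finset ℕ) : Finset (ℕ → ℕ) :=
  (s.pi fun _ => Finset.range k).image fun f i => if h : i ∈ s then f i h else 0

/-- the table with attribute set `s`, all possible rows, and decision labeling `d` -/
def fullTable (k : ℕ) (s : Finset ℕ) (d : (ℕ → ℕ) → Finset ℕ) : Table k where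
  attrs := s
  rows := allRows k s
  dec := fun r => if (d r).Nonempty then d r else {0}
  rows_mem := by
    intro r hr
    simp only [allRows, Finset.mem_image] at hr
    obtain ⟨f, hf, rfl⟩ := hr
    refine ⟨fun i hi => ?_, fun i hi => ?_⟩
    · have h := (Finset.mem_pi.mp hf) i hi
      simp only [Finset.mem_range] at h
      simpa [hi] using h
    · simp [hi]
  dec_nonempty := by
    intro r _
    by_cases h : (d r).Nonempty
    · simp [h]
    · simp [h]

/-- the complete table `T_k` with `m(k)` columns `f_1, …, f_{m(k)}` and `2^{m(k)}` rows,
each row `δ̄` labeled with `ν_k(δ̄)` (which is always nonempty) -/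
def Tk (k : ℕ) : Table 2 := fullTable 2 (Finset.Icc 1 (mnum k)) (nuk k)

/-- the `j`-th node of the complete path of `G_k` determined by the choices `c` -/
def pathNode (c : ℕ → Bool) : ℕ → ℕ
  | 0 => 1
  | j + 1 => if c j then lchild (pathNode c j) else rchild (pathNode c j)

/-- `T_k^*` : the subtable of `T_k` whose rows are exactly the characteristic tuples
of complete paths of `G_k` -/
def Tstar (k : ℕ) : Table 2 where
  attrs := (Tk k).attrs
  rows := (Tk k).rows.filter fun r =>
    ∃ c : ℕ → Bool, ∀ i ∈ Finset.Icc 1 (mnum k), (r i = 1 ↔ ∃ j < k, pathNode c j = i)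
  dec := (Tk k).dec
  rows_mem := fun r hr => (Tk k).rows_mem r (Finset.mem_filter.mp hr).1
  dec_nonempty := fun r hr => (Tk k).dec_nonempty r (Finset.mem_filter.mp hr).1

/-- `r(T)` for a subtable `T` of `T_k^*` : the number of distinct decision sets
`ν_k(δ̄)` among the rows `δ̄` of `T` -/
def rnum (k : ℕ) (T : Table 2) : ℕ := (T.rows.image (nuk k)).card

end


/-! ### auxiliary development -/
noncomputable section Aux



lemma mnum_succ (t : ℕ) : mnum (t + 1) = mnum t + (t + 1) := by
  unfold mnum
  rw [show (t+1) * (t+1+1) = t*(t+1) + 2*(t+1) from by ring]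
  omega

lemma mnum_mono : Monotone mnum := by
  intro a b hab
  induction b with
  | zero => simp at hab; simp [hab]
  | succ n ih =>
    rcases Nat.lt_or_ge a (n+1) with h | h
    · have := ih (by omega)
      rw [mnum_succ]; omega
    · have : a = n + 1 := by omega
      simp [this]

lemma layer_eq {t i : ℕ} (h1 : mnum t < i) (h2 : i ≤ mnum (t+1)) : layer i = t + 1 := by
  unfold layer
  have hmem : (t+1) ∈ {L | i ≤ mnum L} := h2
  apply le_antisymm
  · exact Nat.sInf_le hmem
  · apply le_csInf ⟨_, hmem⟩
    intro L hL
    by_contra hc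
    push_neg at hc
    have : mnum L ≤ mnum t := mnum_mono (by omega)
    have : i ≤ mnum t := le_trans hL this
    omega

def nid (t c : ℕ) : ℕ := mnum (t-1) + c

lemma layer_nid {t c : ℕ} (ht : 1 ≤ t) (hc1 : 1 ≤ c) (hct : c ≤ t) : layer (nid t c) = t := by
  obtain ⟨s, rfl⟩ : ∃ s, t = s + 1 := ⟨t - 1, by omega⟩
  have h : nid (s+1) c = mnum s + c := by simp [nid]
  rw [h]
  exact layer_eq (t := s) (by omega) (by rw [mnum_succ]; omega)

lemma lchild_nid {t c : ℕ} (ht : 1 ≤ t) (hc1 : 1 ≤ c) (hct : c ≤ t) :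
    lchild (nid t c) = nid (t+1) c := by
  unfold lchild
  rw [layer_nid ht hc1 hct]
  obtain ⟨s, rfl⟩ : ∃ s, t = s + 1 := ⟨t - 1, by omega⟩
  simp [nid, mnum_succ]; omega

lemma rchild_nid {t c : ℕ} (ht : 1 ≤ t) (hc1 : 1 ≤ c) (hct : c ≤ t) :
    rchild (nid t c) = nid (t+1) (c+1) := by
  unfold rchild
  rw [layer_nid ht hc1 hct]
  obtain ⟨s, rfl⟩ : ∃ s, t = s + 1 := ⟨t - 1, by omega⟩
  simp [nid, mnum_succ]; omega

lemma nid_le_mnum {t c : ℕ} (hc : c ≤ t) (ht : 1 ≤ t) : nid t c ≤ mnum t := by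
  obtain ⟨s, rfl⟩ : ∃ s, t = s + 1 := ⟨t - 1, by omega⟩
  simp [nid, mnum_succ]; omega

lemma one_le_nid {t c : ℕ} (hc : 1 ≤ c) : 1 ≤ nid t c := by
  simp [nid]; omega

/-- every id in [1, mnum k] has coordinates -/
lemma exists_coords {k i : ℕ} (h1 : 1 ≤ i) (h2 : i ≤ mnum k) :
    ∃ t c, 1 ≤ c ∧ c ≤ t ∧ t ≤ k ∧ i = nid t c := by
  induction k with
  | zero => simp [mnum] at h2; omega
  | succ n ih =>
    rcases le_or_gt i (mnum n) with h | h
    · obtain ⟨t, c, h⟩ := ih h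
      exact ⟨t, c, h.1, h.2.1, by omega, h.2.2.2⟩
    · refine ⟨n+1, i - mnum n, by omega, ?_, le_refl _, by simp [nid]; omega⟩
      rw [mnum_succ] at h2; omega

lemma nid_inj {t c t' c' : ℕ} (hc1 : 1 ≤ c) (hct : c ≤ t) (hc1' : 1 ≤ c') (hct' : c' ≤ t')
    (h : nid t c = nid t' c') : t = t' ∧ c = c' := by
  have ht : 1 ≤ t := le_trans hc1 hct
  have ht' : 1 ≤ t' := le_trans hc1' hct'
  have h1 := layer_nid ht hc1 hct
  have h2 := layer_nid ht' hc1' hct'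
  have : t = t' := by rw [← h1, ← h2, h]
  subst this
  constructor
  · rfl
  · simp [nid] at h; omega

lemma mnum_pos {k : ℕ} (hk : 1 ≤ k) : 1 ≤ mnum k := by
  have := mnum_mono hk
  simpa [mnum] using this

lemma nid_one_one : nid 1 1 = 1 := by unfold nid mnum; norm_num

lemma layer_one : layer 1 = 1 := by
  conv_lhs => rw [← nid_one_one]
  rw [layer_nid le_rfl le_rfl le_rfl]



abbrev Pos := ℕ × ℕ

/-- strict cone below (t,c) -/
def SC (v p : Pos) : Prop := v.1 < p.1 ∧ v.2 ≤ p.2 ∧ p.2 ≤ v.2 + (p.1 - v.1)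

/-- inclusive cone -/
def IC (v p : Pos) : Prop := v.1 ≤ p.1 ∧ v.2 ≤ p.2 ∧ p.2 ≤ v.2 + (p.1 - v.1)

instance : DecidablePred (SC v) := fun p => by unfold SC; infer_instance
instance : DecidablePred (IC v) := fun p => by unfold IC; infer_instance

lemma SC_mk {a b : ℕ} {p : Pos} : SC (a, b) p ↔ a < p.1 ∧ b ≤ p.2 ∧ p.2 ≤ b + (p.1 - a) := Iff.rfl

lemma IC_mk {a b : ℕ} {p : Pos} : IC (a, b) p ↔ a ≤ p.1 ∧ b ≤ p.2 ∧ p.2 ≤ b + (p.1 - a) := Iff.rfl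

lemma SC_intro {a b x y : ℕ} (h1 : a < x) (h2 : b ≤ y) (h3 : y ≤ b + (x - a)) : SC (a,b) (x,y) := ⟨h1, h2, h3⟩

lemma SC_not {a b x y : ℕ} (h : ¬(a < x ∧ b ≤ y ∧ y ≤ b + (x - a))) : ¬ SC (a,b) (x,y) := h

lemma SC_subset_IC {v p : Pos} (h : SC v p) : IC v p := ⟨le_of_lt h.1, h.2.1, h.2.2⟩

lemma SC_trans {v a p : Pos} (hav : SC v a) (hpa : SC a p) : SC v p := by
  obtain ⟨h1, h2, h3⟩ := hav; obtain ⟨g1, g2, g3⟩ := hpa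
  exact ⟨lt_trans h1 g1, le_trans h2 g2, by omega⟩

lemma IC_of_SC_of_IC {v a p : Pos} (hav : SC v a) (hpa : IC a p) : SC v p := by
  obtain ⟨h1, h2, h3⟩ := hav; obtain ⟨g1, g2, g3⟩ := hpa
  exact ⟨lt_of_lt_of_le h1 g1, le_trans h2 g2, by omega⟩

/-- reachable fresh bottom columns from (t,c) descending `f` layers.
`Z` : 0-answered positions (block interior passage), `D` : all queried positions
(block bottoms). The node (t,c) itself is not tested. -/
def Rf (Z D : Finset Pos) : ℕ → ℕ → ℕ → Finset ℕ
  | 0, t, c => if (t, c) ∈ D then ∅ else {c}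
  | f+1, t, c =>
      (if (t+1, c) ∈ Z then ∅ else Rf Z D f (t+1) c) ∪
      (if (t+1, c+1) ∈ Z then ∅ else Rf Z D f (t+1) (c+1))

lemma Rf_subset_Icc (Z D : Finset Pos) : ∀ f t c, Rf Z D f t c ⊆ Finset.Icc c (c + f) := by
  intro f
  induction f with
  | zero => intro t c b hb; simp [Rf] at hb; split at hb <;> simp_all
  | succ n ih =>
    intro t c b hb
    simp only [Rf, Finset.mem_union] at hb
    rcases hb with hb | hb <;> (split at hb; · simp at hb)
    · have := ih (t+1) c hb; simp at this ⊢; omega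
    · have := ih (t+1) (c+1) hb; simp at this ⊢; omega

/-- the all-right edge path -/
lemma right_edge_mem (Z D : Finset Pos) : ∀ f t c,
    (∀ j, 1 ≤ j → j ≤ f → (t + j, c + j) ∉ Z) → (t + f, c + f) ∉ D →
    c + f ∈ Rf Z D f t c := by
  intro f
  induction f with
  | zero => intro t c _ hD; simp only [Rf]; rw [if_neg (by simpa using hD)]; simp
  | succ n ih =>
    intro t c hZ hD
    simp only [Rf, Finset.mem_union]
    right
    rw [if_neg (by simpa using hZ 1 le_rfl (by omega))]
    have := ih (t+1) (c+1) (fun j hj1 hjn => by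
      have := hZ (j+1) (by omega) (by omega)
      simpa [show t + (j+1) = t+1+j by omega, show c + (j+1) = c+1+j by omega] using this)
      (by simpa [show t+1+n = t + (n+1) by omega, show c+1+n = c + (n+1) by omega] using hD)
    simpa [show c + (n+1) = c+1+n by omega] using this

/-- the all-left edge path -/
lemma left_edge_mem (Z D : Finset Pos) : ∀ f t c,
    (∀ j, 1 ≤ j → j ≤ f → (t + j, c) ∉ Z) → (t + f, c) ∉ D →
    c ∈ Rf Z D f t c := by
  intro f
  induction f with
  | zero => intro t c _ hD; simp only [Rf]; rw [if_neg (by simpa using hD)]; simp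
  | succ n ih =>
    intro t c hZ hD
    simp only [Rf, Finset.mem_union]
    left
    rw [if_neg (by simpa using hZ 1 le_rfl (by omega))]
    exact ih (t+1) c (fun j hj1 hjn => by
      have := hZ (j+1) (by omega) (by omega)
      simpa [show t + (j+1) = t+1+j by omega] using this)
      (by simpa [show t+1+n = t + (n+1) by omega] using hD)

/-- generic counting: one more element -/
lemma card_succ_le {α : Type*} [DecidableEq α] {s : Finset α} {p q : α → Prop}
    [DecidablePred p] [DecidablePred q]
    (hpq : ∀ x, p x → q x) {z : α} (hz : z ∈ s) (hzq : q z) (hzp : ¬ p z) :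
    (s.filter p).card + 1 ≤ (s.filter q).card := by
  have h1 : insert z (s.filter p) ⊆ s.filter q := by
    intro x hx
    rcases Finset.mem_insert.mp hx with rfl | hx
    · exact Finset.mem_filter.mpr ⟨hz, hzq⟩
    · obtain ⟨h1, h2⟩ := Finset.mem_filter.mp hx
      exact Finset.mem_filter.mpr ⟨h1, hpq _ h2⟩
  calc (s.filter p).card + 1 = (insert z (s.filter p)).card := by
        rw [Finset.card_insert_of_notMem (by simp [hzp])]
      _ ≤ _ := Finset.card_le_card h1

lemma right_edge_blocker {Z D : Finset Pos} {f t c : ℕ} (h : c + f ∉ Rf Z D f t c) :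
    (∃ j, 1 ≤ j ∧ j ≤ f ∧ (t+j, c+j) ∈ Z) ∨ (t+f, c+f) ∈ D := by
  by_contra hc
  push_neg at hc
  exact h (right_edge_mem Z D f t c hc.1 hc.2)

lemma left_edge_blocker {Z D : Finset Pos} {f t c : ℕ} (h : c ∉ Rf Z D f t c) :
    (∃ j, 1 ≤ j ∧ j ≤ f ∧ (t+j, c) ∈ Z) ∨ (t+f, c) ∈ D := by
  by_contra hc
  push_neg at hc
  exact h (left_edge_mem Z D f t c hc.1 hc.2)

/-- blockers: zero-answered positions plus queried bottom positions -/
def Bset (k : ℕ) (Z D : Finset Pos) : Finset Pos := Z ∪ D.filter (fun p => p.1 = k)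

def Bc (k : ℕ) (Z D : Finset Pos) (t c : ℕ) : ℕ := ((Bset k Z D).filter (SC (t, c))).card

lemma Bc_mono_left (k : ℕ) (Z D : Finset Pos) (t c : ℕ) : Bc k Z D (t+1) c ≤ Bc k Z D t c := by
  apply Finset.card_le_card
  apply Finset.monotone_filter_right
  intro p _ hp
  rw [SC_mk] at hp ⊢
  omega

lemma Bc_mono_right (k : ℕ) (Z D : Finset Pos) (t c : ℕ) : Bc k Z D (t+1) (c+1) ≤ Bc k Z D t c := by
  apply Finset.card_le_card
  apply Finset.monotone_filter_right
  intro p _ hp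
  rw [SC_mk] at hp ⊢
  omega

/-- a blocker on the right edge of the right child, counted in the cone of (t,c)
but not the cone of the left child -/
lemma Bc_step_right {k : ℕ} {Z D : Finset Pos} {t c n : ℕ} (hk : t + (n+1) = k)
    (hblock : (∃ j, 1 ≤ j ∧ j ≤ n ∧ (t+1+j, c+1+j) ∈ Z) ∨ ((t+1, c+1) ∈ Z) ∨ (t+1+n, c+1+n) ∈ D) :
    Bc k Z D (t+1) c + 1 ≤ Bc k Z D t c := by
  have himp : ∀ x : Pos, SC (t+1, c) x → SC (t, c) x := by
    intro x hx; rw [SC_mk] at hx ⊢; omega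
  obtain ⟨j, hj0, hjn, hz⟩ | hz | hz := hblock
  · refine card_succ_le (z := (t+1+j, c+1+j)) himp ?_ ?_ ?_
    · simp [Bset, hz]
    · exact SC_intro (by omega) (by omega) (by omega)
    · exact SC_not (by omega)
  · refine card_succ_le (z := (t+1, c+1)) himp ?_ ?_ ?_
    · simp [Bset, hz]
    · exact SC_intro (by omega) (by omega) (by omega)
    · exact SC_not (by omega)
  · refine card_succ_le (z := (t+1+n, c+1+n)) himp ?_ ?_ ?_
    · simp only [Bset, Finset.mem_union, Finset.mem_filter]
      right; exact ⟨hz, by show t+1+n = k; omega⟩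
    · exact SC_intro (by omega) (by omega) (by omega)
    · exact SC_not (by omega)

/-- mirror: a blocker on the left edge of the left child -/
lemma Bc_step_left {k : ℕ} {Z D : Finset Pos} {t c n : ℕ} (hk : t + (n+1) = k)
    (hblock : (∃ j, 1 ≤ j ∧ j ≤ n ∧ (t+1+j, c) ∈ Z) ∨ ((t+1, c) ∈ Z) ∨ (t+1+n, c) ∈ D) :
    Bc k Z D (t+1) (c+1) + 1 ≤ Bc k Z D t c := by
  have himp : ∀ x : Pos, SC (t+1, c+1) x → SC (t, c) x := by
    intro x hx; rw [SC_mk] at hx ⊢; omega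
  obtain ⟨j, hj0, hjn, hz⟩ | hz | hz := hblock
  · refine card_succ_le (z := (t+1+j, c)) himp ?_ ?_ ?_
    · simp [Bset, hz]
    · exact SC_intro (by omega) (by omega) (by omega)
    · exact SC_not (by omega)
  · refine card_succ_le (z := (t+1, c)) himp ?_ ?_ ?_
    · simp [Bset, hz]
    · exact SC_intro (by omega) (by omega) (by omega)
    · exact SC_not (by omega)
  · refine card_succ_le (z := (t+1+n, c)) himp ?_ ?_ ?_
    · simp only [Bset, Finset.mem_union, Finset.mem_filter]
      right; exact ⟨hz, by show t+1+n = k; omega⟩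
    · exact SC_intro (by omega) (by omega) (by omega)
    · exact SC_not (by omega)

/-- **Lemma F** (flow): if something is reachable then
reachable + blockers-in-cone is at least the width. -/
lemma lemmaF {k : ℕ} (Z D : Finset Pos) : ∀ f t c, t + f = k → (Rf Z D f t c).Nonempty →
    f + 1 ≤ (Rf Z D f t c).card + Bc k Z D t c := by
  intro f
  induction f with
  | zero =>
    intro t c _ hne
    have : (Rf Z D 0 t c).card ≥ 1 := Finset.one_le_card.mpr hne
    omega
  | succ n ih =>
    intro t c hk hne
    by_cases hg2 : (t+1, c+1) ∈ Z
    · -- right child zero-answered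
      have hR : Rf Z D (n+1) t c = if (t+1, c) ∈ Z then ∅ else Rf Z D n (t+1) c := by
        simp [Rf, hg2]
      rw [hR] at hne ⊢
      split at hne
      · simp at hne
      · have h1 := ih (t+1) c (by omega) hne
        have h2 := Bc_step_right (Z := Z) (D := D) hk (Or.inr (Or.inl hg2))
        split
        · simp_all
        · omega
    · by_cases hR2 : (Rf Z D n (t+1) (c+1)).Nonempty
      · by_cases hg1 : (t+1, c) ∈ Z
        · -- left child zero-answered
          have hR : Rf Z D (n+1) t c = Rf Z D n (t+1) (c+1) := by
            simp [Rf, hg2, hg1]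
          rw [hR]
          have h1 := ih (t+1) (c+1) (by omega) hR2
          have h2 := Bc_step_left (Z := Z) (D := D) hk (Or.inr (Or.inl hg1))
          omega
        · by_cases hR1 : (Rf Z D n (t+1) c).Nonempty
          · -- both children alive
            have hR : Rf Z D (n+1) t c = Rf Z D n (t+1) c ∪ Rf Z D n (t+1) (c+1) := by
              simp [Rf, hg2, hg1]
            rw [hR]
            by_cases hsub : Rf Z D n (t+1) (c+1) ⊆ Rf Z D n (t+1) c
            · -- right reachable set contained in left: right edge must be blocked
              have hcard : (Rf Z D n (t+1) c ∪ Rf Z D n (t+1) (c+1)).card = (Rf Z D n (t+1) c).card := by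
                rw [Finset.union_eq_left.mpr hsub]
              have hedge : c + 1 + n ∉ Rf Z D n (t+1) (c+1) := by
                intro hmem
                have := Rf_subset_Icc Z D n (t+1) c (hsub hmem)
                rw [Finset.mem_Icc] at this; omega
              have hblock := right_edge_blocker hedge
              have h2 : Bc k Z D (t+1) c + 1 ≤ Bc k Z D t c := by
                apply Bc_step_right hk
                rcases hblock with ⟨j, h1', h2', h3'⟩ | hD
                · exact Or.inl ⟨j, h1', h2', h3'⟩
                · exact Or.inr (Or.inr hD)
              have h1 := ih (t+1) c (by omega) hR1
              omega
            · -- strictly more bottoms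
              obtain ⟨x, hx2, hx1⟩ := Finset.not_subset.mp hsub
              have hcard : (Rf Z D n (t+1) c).card + 1 ≤ (Rf Z D n (t+1) c ∪ Rf Z D n (t+1) (c+1)).card := by
                have : insert x (Rf Z D n (t+1) c) ⊆ Rf Z D n (t+1) c ∪ Rf Z D n (t+1) (c+1) := by
                  intro y hy
                  rcases Finset.mem_insert.mp hy with rfl | hy
                  · exact Finset.mem_union_right _ hx2
                  · exact Finset.mem_union_left _ hy
                calc (Rf Z D n (t+1) c).card + 1 = (insert x (Rf Z D n (t+1) c)).card := by
                      rw [Finset.card_insert_of_notMem hx1]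
                  _ ≤ _ := Finset.card_le_card this
              have h1 := ih (t+1) c (by omega) hR1
              have h2 := Bc_mono_left k Z D t c
              omega
          · -- left reachable set empty: left edge blocked
            have hR : Rf Z D (n+1) t c = Rf Z D n (t+1) (c+1) := by
              have : Rf Z D n (t+1) c = ∅ := Finset.not_nonempty_iff_eq_empty.mp hR1
              simp [Rf, hg2, hg1, this]
            rw [hR]
            have hedge : c ∉ Rf Z D n (t+1) c := by
              intro hmem; exact hR1 ⟨c, hmem⟩
            have hblock := left_edge_blocker hedge
            have h2 : Bc k Z D (t+1) (c+1) + 1 ≤ Bc k Z D t c := by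
              apply Bc_step_left hk
              rcases hblock with ⟨j, h1', h2', h3'⟩ | hD
              · exact Or.inl ⟨j, h1', h2', h3'⟩
              · exact Or.inr (Or.inr hD)
            have h1 := ih (t+1) (c+1) (by omega) hR2
            omega
      · -- right reachable set empty
        have hR2' : Rf Z D n (t+1) (c+1) = ∅ := Finset.not_nonempty_iff_eq_empty.mp hR2
        have hR : Rf Z D (n+1) t c = if (t+1, c) ∈ Z then ∅ else Rf Z D n (t+1) c := by
          simp [Rf, hg2, hR2']
        rw [hR] at hne ⊢
        split at hne
        · simp at hne
        · have h1 := ih (t+1) c (by omega) hne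
          have hedge : c + 1 + n ∉ Rf Z D n (t+1) (c+1) := by simp [hR2']
          have hblock := right_edge_blocker hedge
          have h2 : Bc k Z D (t+1) c + 1 ≤ Bc k Z D t c := by
            apply Bc_step_right hk
            rcases hblock with ⟨j, h1', h2', h3'⟩ | hD
            · exact Or.inl ⟨j, h1', h2', h3'⟩
            · exact Or.inr (Or.inr hD)
          split
          · simp_all
          · omega

lemma SC_child_left {t c : ℕ} {x : Pos} (h : SC (t+1, c) x) : SC (t, c) x := by
  rw [SC_mk] at h ⊢; omega

lemma SC_child_right {t c : ℕ} {x : Pos} (h : SC (t+1, c+1) x) : SC (t, c) x := by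
  rw [SC_mk] at h ⊢; omega

/-- inserting a position outside the strict cone does not change reachability -/
lemma Rf_insertZ_outside {a : Pos} (Z D : Finset Pos) : ∀ f t c, ¬ SC (t,c) a →
    Rf (insert a Z) D f t c = Rf Z D f t c := by
  intro f
  induction f with
  | zero => intro t c _; simp [Rf]
  | succ n ih =>
    intro t c hout
    have h1 : (t+1, c) ≠ a := by
      rintro rfl; exact hout (SC_intro (by omega) (by omega) (by omega))
    have h2 : (t+1, c+1) ≠ a := by
      rintro rfl; exact hout (SC_intro (by omega) (by omega) (by omega))
    have g1 : ((t+1, c) ∈ insert a Z) = ((t+1, c) ∈ Z) := by simp [h1]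
    have g2 : ((t+1, c+1) ∈ insert a Z) = ((t+1, c+1) ∈ Z) := by simp [h2]
    simp only [Rf, g1, g2, ih (t+1) c (fun h => hout (SC_child_left h)),
      ih (t+1) (c+1) (fun h => hout (SC_child_right h))]

/-- inserting a position that is already blocked by `Z` into `D` changes nothing
(as long as it is not the source) -/
lemma Rf_insertD_of_Z {a : Pos} (Z D : Finset Pos) (haZ : a ∈ Z) : ∀ f t c, (t,c) ≠ a →
    Rf Z (insert a D) f t c = Rf Z D f t c := by
  intro f
  induction f with
  | zero => intro t c h; simp [Rf, h]
  | succ n ih =>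
    intro t c _
    simp only [Rf]
    congr 1
    · by_cases h : (t+1, c) ∈ Z
      · simp [h]
      · rw [if_neg h, if_neg h, ih (t+1) c (by rintro rfl; exact h haZ)]
    · by_cases h : (t+1, c+1) ∈ Z
      · simp [h]
      · rw [if_neg h, if_neg h, ih (t+1) (c+1) (by rintro rfl; exact h haZ)]

/-- inserting a non-bottom position into `D` does not change reachability -/
lemma Rf_insertD_interior {a : Pos} {k : ℕ} (Z D : Finset Pos) (hak : a.1 ≠ k) :
    ∀ f t c, t + f = k → Rf Z (insert a D) f t c = Rf Z D f t c := by
  intro f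
  induction f with
  | zero =>
    intro t c htk
    have : (t, c) ≠ a := by rintro rfl; simp at htk; omega
    simp [Rf, this]
  | succ n ih =>
    intro t c htk
    simp only [Rf, ih (t+1) c (by omega), ih (t+1) (c+1) (by omega)]

/-- membership lost by blocking `a` : the bottom is reachable from `a` and
`a` is in the strict cone. -/
lemma Rf_diff {a : Pos} (Z D : Finset Pos) : ∀ f t c b,
    b ∈ Rf Z D f t c → b ∉ Rf (insert a Z) D f t c →
    SC (t,c) a ∧ a.1 ≤ t + f ∧ b ∈ Rf Z D (t + f - a.1) a.1 a.2 := by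
  intro f
  induction f with
  | zero =>
    intro t c b h1 h2
    exact absurd h1 (by simpa [Rf] using h2)
  | succ n ih =>
    intro t c b h1 h2
    simp only [Rf, Finset.mem_union] at h1 h2
    push_neg at h2
    obtain ⟨h2l, h2r⟩ := h2
    rcases h1 with h1 | h1
    · split at h1
      · simp at h1
      · rename_i hg
        by_cases ha : (t+1, c) = a
        · refine ⟨by rw [← ha]; exact SC_intro (by omega) (by omega) (by omega),
            by rw [← ha]; show t+1 ≤ t + (n+1); omega, ?_⟩
          have : t + (n+1) - a.1 = n := by rw [← ha]; show t + (n+1) - (t+1) = n; omega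
          rw [this, ← ha]
          exact h1
        · have hgate : (t+1, c) ∉ insert a Z := by simp [hg, ha]
          rw [if_neg hgate] at h2l
          obtain ⟨hsc, hle, hmem⟩ := ih (t+1) c b h1 h2l
          exact ⟨SC_child_left hsc, by omega, by
            have : t + 1 + n - a.1 = t + (n+1) - a.1 := by omega
            rwa [this] at hmem⟩
    · split at h1
      · simp at h1
      · rename_i hg
        by_cases ha : (t+1, c+1) = a
        · refine ⟨by rw [← ha]; exact SC_intro (by omega) (by omega) (by omega),
            by rw [← ha]; show t+1 ≤ t + (n+1); omega, ?_⟩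
          have : t + (n+1) - a.1 = n := by rw [← ha]; show t + (n+1) - (t+1) = n; omega
          rw [this, ← ha]
          exact h1
        · have hgate : (t+1, c+1) ∉ insert a Z := by simp [hg, ha]
          rw [if_neg hgate] at h2r
          obtain ⟨hsc, hle, hmem⟩ := ih (t+1) (c+1) b h1 h2r
          exact ⟨SC_child_right hsc, by omega, by
            have : t + 1 + n - a.1 = t + (n+1) - a.1 := by omega
            rwa [this] at hmem⟩

lemma not_IC_of_layer {a z : Pos} (h : z.1 < a.1) : ¬ IC a z := fun hic => by
  have := hic.1; omega

/-- **Lemma CVL**: if blocking the single fresh position `a` kills all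
reachability from (t,c), the annulus (strict cone of (t,c) minus inclusive cone
of `a`) contains at least `a.1 - t - 1` blockers. -/
lemma lemmaCVL {k : ℕ} {a : Pos} (Z D : Finset Pos) (haZ : a ∉ Z) : ∀ f t c, t + f = k →
    (Rf Z D f t c).Nonempty → Rf (insert a Z) D f t c = ∅ →
    a.1 - t - 1 ≤ ((Bset k Z D).filter (fun p => SC (t,c) p ∧ ¬ IC a p)).card := by
  intro f
  induction f with
  | zero =>
    intro t c _ hne hemp
    have heq : Rf (insert a Z) D 0 t c = Rf Z D 0 t c := by simp [Rf]
    rw [heq] at hemp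
    rw [hemp] at hne
    simp at hne
  | succ n ih =>
    intro t c hk hne hemp
    rcases Nat.lt_or_ge a.1 (t+2) with hd | hd
    · have h0 : a.1 - t - 1 = 0 := by omega
      rw [h0]; exact Nat.zero_le _
    have hne1 : (t+1, c) ≠ a := by
      intro h; have : a.1 = t+1 := by rw [← h]
      omega
    have hne2 : (t+1, c+1) ≠ a := by
      intro h; have : a.1 = t+1 := by rw [← h]
      omega
    have gI : ((t+1,c) ∈ insert a Z) ↔ ((t+1,c) ∈ Z) := by
      simp [Finset.mem_insert, hne1]
    have gII : ((t+1,c+1) ∈ insert a Z) ↔ ((t+1,c+1) ∈ Z) := by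
      simp [Finset.mem_insert, hne2]
    simp only [Rf] at hne hemp
    rw [Finset.union_eq_empty] at hemp
    obtain ⟨hempL, hempR⟩ := hemp
    by_cases hcase : (t+1, c) ∉ Z ∧ (Rf Z D n (t+1) c).Nonempty
    · -- CASE I : descend left
      obtain ⟨hg1, hR1⟩ := hcase
      have hR1' : Rf (insert a Z) D n (t+1) c = ∅ := by
        rwa [if_neg (fun h => hg1 (gI.mp h))] at hempL
      obtain ⟨b, hb⟩ := hR1
      have hbd : b ∉ Rf (insert a Z) D n (t+1) c := by rw [hR1']; simp
      obtain ⟨hsc, hle, _⟩ := Rf_diff Z D n (t+1) c b hb hbd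
      have hIH := ih (t+1) c (by omega) ⟨b, hb⟩ hR1'
      -- find the extra blocker on the right
      have hblock : ∃ z : Pos, z ∈ Bset k Z D ∧ SC (t,c) z ∧ ¬ SC (t+1,c) z ∧ ¬ IC a z := by
        by_cases hz2 : (t+1, c+1) ∈ Z
        · exact ⟨(t+1, c+1), by simp [Bset, hz2],
            SC_intro (by omega) (by omega) (by omega),
            SC_not (by omega), not_IC_of_layer (by show t+1 < a.1; omega)⟩
        · have hR2' : Rf (insert a Z) D n (t+1) (c+1) = ∅ := by
            rwa [if_neg (fun h => hz2 (gII.mp h))] at hempR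
          have hedge : c+1+n ∉ Rf (insert a Z) D n (t+1) (c+1) := by rw [hR2']; simp
          rcases right_edge_blocker hedge with ⟨j, hj1, hjn, hjZ⟩ | hD
          · rcases Finset.mem_insert.mp hjZ with hja | hjZ'
            · exfalso
              have e1 : a.1 = t+1+j := by rw [← hja]
              have e2 : a.2 = c+1+j := by rw [← hja]
              have := hsc.2.2
              omega
            · refine ⟨(t+1+j, c+1+j), by simp [Bset, hjZ'],
                SC_intro (by omega) (by omega) (by omega), SC_not (by omega), ?_⟩
              intro hic
              exact (SC_not (a := t+1) (b := c) (by omega)) (IC_of_SC_of_IC hsc hic)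
          · refine ⟨(t+1+n, c+1+n), ?_, SC_intro (by omega) (by omega) (by omega),
              SC_not (by omega), ?_⟩
            · simp only [Bset, Finset.mem_union, Finset.mem_filter]
              right; exact ⟨hD, by show t+1+n = k; omega⟩
            · intro hic
              exact (SC_not (a := t+1) (b := c) (by omega)) (IC_of_SC_of_IC hsc hic)
      obtain ⟨z, hzB, hz1, hz2, hz3⟩ := hblock
      have hcount := card_succ_le (s := Bset k Z D)
        (p := fun p => SC (t+1,c) p ∧ ¬ IC a p) (q := fun p => SC (t,c) p ∧ ¬ IC a p)
        (fun x hx => ⟨SC_child_left hx.1, hx.2⟩) hzB ⟨hz1, hz3⟩ (fun h => hz2 h.1)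
      omega
    · -- CASE II : descend right
      have hgated : (if (t+1,c) ∈ Z then (∅ : Finset ℕ) else Rf Z D n (t+1) c) = ∅ := by
        by_cases h : (t+1, c) ∈ Z
        · simp [h]
        · rw [if_neg h]
          rcases Finset.eq_empty_or_nonempty (Rf Z D n (t+1) c) with he | hne'
          · exact he
          · exact absurd ⟨h, hne'⟩ hcase
      rw [hgated] at hne
      simp only [Finset.empty_union] at hne
      have hg2 : (t+1, c+1) ∉ Z := by
        intro h; rw [if_pos h] at hne; simp at hne
      rw [if_neg hg2] at hne
      have hR2' : Rf (insert a Z) D n (t+1) (c+1) = ∅ := by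
        rwa [if_neg (fun h => hg2 (gII.mp h))] at hempR
      obtain ⟨b, hb⟩ := hne
      have hbd : b ∉ Rf (insert a Z) D n (t+1) (c+1) := by rw [hR2']; simp
      obtain ⟨hsc, hle, _⟩ := Rf_diff Z D n (t+1) (c+1) b hb hbd
      have hIH := ih (t+1) (c+1) (by omega) ⟨b, hb⟩ hR2'
      have hblock : ∃ z : Pos, z ∈ Bset k Z D ∧ SC (t,c) z ∧ ¬ SC (t+1,c+1) z ∧ ¬ IC a z := by
        by_cases hz1 : (t+1, c) ∈ Z
        · exact ⟨(t+1, c), by simp [Bset, hz1],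
            SC_intro (by omega) (by omega) (by omega),
            SC_not (by omega), not_IC_of_layer (by show t+1 < a.1; omega)⟩
        · have hR1 : Rf Z D n (t+1) c = ∅ := by
            rcases Finset.eq_empty_or_nonempty (Rf Z D n (t+1) c) with he | hne'
            · exact he
            · exact absurd ⟨hz1, hne'⟩ hcase
          have hedge : c ∉ Rf Z D n (t+1) c := by rw [hR1]; simp
          rcases left_edge_blocker hedge with ⟨j, hj1, hjn, hjZ⟩ | hD
          · refine ⟨(t+1+j, c), by simp [Bset, hjZ],
              SC_intro (by omega) (by omega) (by omega), SC_not (by omega), ?_⟩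
            intro hic
            exact (SC_not (a := t+1) (b := c+1) (by omega)) (IC_of_SC_of_IC hsc hic)
          · refine ⟨(t+1+n, c), ?_, SC_intro (by omega) (by omega) (by omega),
              SC_not (by omega), ?_⟩
            · simp only [Bset, Finset.mem_union, Finset.mem_filter]
              right; exact ⟨hD, by show t+1+n = k; omega⟩
            · intro hic
              exact (SC_not (a := t+1) (b := c+1) (by omega)) (IC_of_SC_of_IC hsc hic)
      obtain ⟨z, hzB, hz1, hz2, hz3⟩ := hblock
      have hcount := card_succ_le (s := Bset k Z D)
        (p := fun p => SC (t+1,c+1) p ∧ ¬ IC a p) (q := fun p => SC (t,c) p ∧ ¬ IC a p)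
        (fun x hx => ⟨SC_child_right hx.1, hx.2⟩) hzB ⟨hz1, hz3⟩ (fun h => hz2 h.1)
      omega

/-! ## The adversary game -/

def rootP : Pos := (1, 1)

def PosOK (k : ℕ) (p : Pos) : Prop := 1 ≤ p.2 ∧ p.2 ≤ p.1 ∧ p.1 ≤ k

/-- the adversary invariant -/
structure GInv (k : ℕ) (Z D : Finset Pos) : Prop where
  sub : Z ⊆ D
  ok : ∀ p ∈ D, PosOK k p
  rootZ : rootP ∉ Z
  top : ∀ v ∈ D \ Z, v.1 < k
  live : ∀ v ∈ insert rootP (D \ Z), (Rf Z D (k - v.1) v.1 v.2).Nonempty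
  ledger : ∀ v ∈ insert rootP (D \ Z), v.1 - 1 ≤ (D.filter (fun p => ¬ SC v p)).card

lemma inv_init (k : ℕ) : GInv k ∅ ∅ where
  sub := by simp
  ok := by simp
  rootZ := by simp
  top := by simp
  live := by
    intro v hv
    rcases Finset.mem_insert.mp hv with rfl | hv'
    · exact ⟨1 + (k - 1), right_edge_mem _ _ _ _ _ (by simp) (by simp)⟩
    · simp at hv' 
  ledger := by
    intro v hv
    rcases Finset.mem_insert.mp hv with rfl | hv'
    · simp [rootP]
    · simp at hv' 

def Forced (k : ℕ) (Z D : Finset Pos) (a : Pos) : Prop :=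
  a = rootP ∨ ∃ v ∈ insert rootP (D \ Z), Rf (insert a Z) D (k - v.1) v.1 v.2 = ∅

/-- the adversary's answer -/
def ansP (k : ℕ) (Z D : Finset Pos) (a : Pos) : ℕ :=
  if a ∈ D then (if a ∈ Z then 0 else 1)
  else if Forced k Z D a then 1 else 0

lemma Bset_subset_D {k : ℕ} {Z D : Finset Pos} (h : Z ⊆ D) : Bset k Z D ⊆ D := by
  intro x hx
  rcases Finset.mem_union.mp hx with hx | hx
  · exact h hx
  · exact (Finset.mem_filter.mp hx).1

/-- answering 0 to a non-forced query -/
lemma inv_step_zero {k : ℕ} {Z D : Finset Pos} (hInv : GInv k Z D)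
    {a : Pos} (ha : PosOK k a) (haD : a ∉ D) (hnf : ¬ Forced k Z D a) :
    GInv k (insert a Z) (insert a D) := by
  rw [Forced, not_or] at hnf
  obtain ⟨hroot, hforce⟩ := hnf
  push_neg at hforce
  have hdz : (insert a D) \ (insert a Z) = D \ Z := by
    ext x
    simp only [Finset.mem_sdiff, Finset.mem_insert]
    constructor
    · rintro ⟨h1 | h1, h2⟩
      · exact absurd (Or.inl h1) h2
      · exact ⟨h1, fun hx => h2 (Or.inr hx)⟩
    · rintro ⟨h1, h2⟩
      exact ⟨Or.inr h1, by rintro (rfl | hx); exacts [haD h1, h2 hx]⟩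
  refine ⟨Finset.insert_subset_insert _ hInv.sub, ?_, ?_, ?_, ?_, ?_⟩
  · intro p hp
    rcases Finset.mem_insert.mp hp with rfl | hp
    · exact ha
    · exact hInv.ok p hp
  · simp only [Finset.mem_insert, not_or]
    exact ⟨fun h => hroot h.symm, hInv.rootZ⟩
  · rw [hdz]; exact hInv.top
  · rw [hdz]
    intro v hv
    have hva : (v.1, v.2) ≠ a := by
      rcases Finset.mem_insert.mp hv with rfl | hv'
      · simpa [rootP] using fun h => hroot h.symm
      · rintro rfl
        exact haD (Finset.mem_sdiff.mp hv').1
    rw [Rf_insertD_of_Z (insert a Z) D (Finset.mem_insert_self a Z) _ _ _ hva]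
    exact hforce v hv
  · rw [hdz]
    intro v hv
    refine le_trans (hInv.ledger v hv) (Finset.card_le_card ?_)
    exact Finset.filter_subset_filter _ (Finset.subset_insert a D)

/-- the telescoping ledger step -/
lemma ledger_telescope {D : Finset Pos} {a v : Pos} (haD : a ∉ D)
    (hsc : SC v a) (hv1 : 1 ≤ v.1)
    (hled : v.1 - 1 ≤ (D.filter (fun p => ¬ SC v p)).card)
    (hCVL : a.1 - v.1 - 1 ≤ (D.filter (fun p => SC v p ∧ ¬ IC a p)).card) :
    a.1 - 1 ≤ ((insert a D).filter (fun p => ¬ SC a p)).card := by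
  classical
  set S1 := D.filter (fun p => ¬ SC v p) with hS1
  set S2 := D.filter (fun p => SC v p ∧ ¬ IC a p) with hS2
  have hdisj : Disjoint S1 S2 := by
    rw [Finset.disjoint_left]
    intro x hx1 hx2
    exact (Finset.mem_filter.mp hx1).2 (Finset.mem_filter.mp hx2).2.1
  have hsub : S1 ∪ S2 ⊆ D.filter (fun p => ¬ SC a p) := by
    intro x hx
    rcases Finset.mem_union.mp hx with hx | hx
    · obtain ⟨hxd, hxp⟩ := Finset.mem_filter.mp hx
      exact Finset.mem_filter.mpr ⟨hxd, fun h => hxp (SC_trans hsc h)⟩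
    · obtain ⟨hxd, hxp⟩ := Finset.mem_filter.mp hx
      exact Finset.mem_filter.mpr ⟨hxd, fun h => hxp.2 (SC_subset_IC h)⟩
  have h1 : S1.card + S2.card ≤ (D.filter (fun p => ¬ SC a p)).card := by
    rw [← Finset.card_union_of_disjoint hdisj]
    exact Finset.card_le_card hsub
  have h2 : insert a (D.filter (fun p => ¬ SC a p)) ⊆ (insert a D).filter (fun p => ¬ SC a p) := by
    intro x hx
    rcases Finset.mem_insert.mp hx with rfl | hx
    · exact Finset.mem_filter.mpr ⟨Finset.mem_insert_self _ _, fun h => by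
        have := h.1; omega⟩
    · obtain ⟨hxd, hxp⟩ := Finset.mem_filter.mp hx
      exact Finset.mem_filter.mpr ⟨Finset.mem_insert_of_mem hxd, hxp⟩
  have h3 : a ∉ D.filter (fun p => ¬ SC a p) := fun h => haD (Finset.mem_filter.mp h).1
  have h4 := Finset.card_le_card h2
  rw [Finset.card_insert_of_notMem h3] at h4
  have := hsc.1
  omega

/-- answering 1 to a forced query (within budget) -/
lemma inv_step_one {k : ℕ} {Z D : Finset Pos} (hk : 2 ≤ k) (hInv : GInv k Z D)
    {a : Pos} (ha : PosOK k a) (haD : a ∉ D) (hf : Forced k Z D a)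
    (hcard : D.card + 3 ≤ k) :
    GInv k Z (insert a D) := by
  have haZ : a ∉ Z := fun h => haD (hInv.sub h)
  have hdz : (insert a D) \ Z = insert a (D \ Z) := by
    ext x
    simp only [Finset.mem_sdiff, Finset.mem_insert]
    constructor
    · rintro ⟨rfl | h1, h2⟩
      · exact Or.inl rfl
      · exact Or.inr ⟨h1, h2⟩
    · rintro (rfl | ⟨h1, h2⟩)
      · exact ⟨Or.inl rfl, haZ⟩
      · exact ⟨Or.inr h1, h2⟩
  rcases hf with rfl | ⟨v, hv, hemp⟩
  · -- a is the root
    have hr1 : (rootP : Pos).1 = 1 := rfl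
    refine ⟨fun x hx => Finset.mem_insert_of_mem (hInv.sub hx), ?_, hInv.rootZ, ?_, ?_, ?_⟩
    · intro p hp
      rcases Finset.mem_insert.mp hp with rfl | hp
      · exact ha
      · exact hInv.ok p hp
    · rw [hdz]
      intro v hv
      rcases Finset.mem_insert.mp hv with rfl | hv
      · show 1 < k; omega
      · exact hInv.top v hv
    · rw [hdz]
      intro v hv
      have hra : (rootP : Pos).1 ≠ k := by omega
      have heq := Rf_insertD_interior (a := rootP) (k := k) Z D hra (k - v.1) v.1 v.2
        (by
          have h1le : v.1 ≤ k := by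
            rcases Finset.mem_insert.mp hv with rfl | hv'
            · omega
            · rcases Finset.mem_insert.mp hv' with rfl | hv''
              · omega
              · exact (hInv.ok v (Finset.mem_sdiff.mp hv'').1).2.2
          omega)
      rw [heq]
      rcases Finset.mem_insert.mp hv with rfl | hv
      · exact hInv.live rootP (Finset.mem_insert_self _ _)
      · exact hInv.live v hv
    · rw [hdz]
      intro v hv
      rcases Finset.mem_insert.mp hv with rfl | hv
      · simp [hr1]
      · exact le_trans (hInv.ledger v hv)
          (Finset.card_le_card (Finset.filter_subset_filter _ (Finset.subset_insert _ D)))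
  · -- a forced through some v
    have hv1k : v.1 ≤ k ∧ 1 ≤ v.1 := by
      rcases Finset.mem_insert.mp hv with rfl | hv'
      · exact ⟨by show 1 ≤ k; omega, le_refl _⟩
      · have := hInv.ok v (Finset.mem_sdiff.mp hv').1
        exact ⟨this.2.2, le_trans this.1 this.2.1⟩
    have hfk : v.1 + (k - v.1) = k := by omega
    obtain ⟨b, hb⟩ := hInv.live v hv
    have hbd : b ∉ Rf (insert a Z) D (k - v.1) v.1 v.2 := by rw [hemp]; simp
    have hb' : b ∈ Rf Z D (k - v.1) (v.1, v.2).1 (v.1, v.2).2 := hb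
    obtain ⟨hsc, hle, hmem⟩ := Rf_diff Z D (k - v.1) v.1 v.2 b hb' hbd
    rw [hfk] at hle hmem
    -- a cannot be a bottom node: budget contradiction
    have hak : a.1 < k := by
      by_contra hc
      push_neg at hc
      have hak' : a.1 = k := le_antisymm ha.2.2 hc
      have hcard1 : Rf Z D (k - v.1) v.1 v.2 ⊆ {a.2} := by
        intro x hx
        have hxd : x ∉ Rf (insert a Z) D (k - v.1) v.1 v.2 := by rw [hemp]; simp
        obtain ⟨_, _, hxm⟩ := Rf_diff Z D (k - v.1) v.1 v.2 x hx hxd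
        rw [hfk, hak'] at hxm
        simp only [Nat.sub_self, Rf] at hxm
        split at hxm
        · simp at hxm
        · simpa using hxm
      have hc1 : (Rf Z D (k - v.1) v.1 v.2).card = 1 := by
        refine le_antisymm (le_trans (Finset.card_le_card hcard1) (by simp)) ?_
        exact Finset.one_le_card.mpr ⟨b, hb⟩
      have hF := lemmaF (k := k) Z D (k - v.1) v.1 v.2 hfk ⟨b, hb⟩
      rw [hc1] at hF
      have hBD : Bc k Z D v.1 v.2 ≤ (D.filter (fun p => SC (v.1, v.2) p)).card :=
        Finset.card_le_card (Finset.filter_subset_filter _ (Bset_subset_D hInv.sub))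
      have hled := hInv.ledger v hv
      have hsplit := Finset.card_filter_add_card_filter_not
        (s := D) (p := fun p => SC (v.1, v.2) p)
      have hveta : (D.filter (fun p => ¬ SC v p)).card
          = (D.filter (fun p => ¬ SC (v.1, v.2) p)).card := by rfl
      rw [hveta] at hled
      omega
    -- now the real step : answer 1 at the interior node a
    have hDeq : ∀ w : Pos, w.1 ≤ k →
        Rf Z (insert a D) (k - w.1) w.1 w.2 = Rf Z D (k - w.1) w.1 w.2 := by
      intro w hw
      exact Rf_insertD_interior (k := k) Z D (by omega) _ _ _ (by omega)
    refine ⟨fun x hx => Finset.mem_insert_of_mem (hInv.sub hx), ?_, hInv.rootZ, ?_, ?_, ?_⟩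
    · intro p hp
      rcases Finset.mem_insert.mp hp with rfl | hp
      · exact ha
      · exact hInv.ok p hp
    · rw [hdz]
      intro w hw
      rcases Finset.mem_insert.mp hw with rfl | hw
      · exact hak
      · exact hInv.top w hw
    · rw [hdz]
      intro w hw
      rcases Finset.mem_insert.mp hw with rfl | hw
      · rw [hDeq rootP (by show 1 ≤ k; omega)]
        exact hInv.live rootP (Finset.mem_insert_self _ _)
      · rcases Finset.mem_insert.mp hw with heq | hw'
        · rw [heq, hDeq a ha.2.2]
          exact ⟨b, hmem⟩
        · rw [hDeq w (hInv.ok w (Finset.mem_sdiff.mp hw').1).2.2]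
          exact hInv.live w (Finset.mem_insert_of_mem hw')
    · rw [hdz]
      intro w hw
      rcases Finset.mem_insert.mp hw with rfl | hw
      · show rootP.1 - 1 ≤ _
        have h0 : (rootP : Pos).1 - 1 = 0 := rfl
        rw [h0]; exact Nat.zero_le _
      · rcases Finset.mem_insert.mp hw with heq | hw'
        · rw [heq]
          -- the telescoping ledger for the new node a
          have hCVL := lemmaCVL (k := k) (a := a) Z D haZ (k - v.1) v.1 v.2 hfk
            (hInv.live v hv) hemp
          have hCVL' : a.1 - v.1 - 1 ≤ (D.filter (fun p => SC v p ∧ ¬ IC a p)).card := by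
            refine le_trans hCVL (Finset.card_le_card ?_)
            exact Finset.filter_subset_filter _ (Bset_subset_D hInv.sub)
          exact ledger_telescope haD hsc hv1k.2 (hInv.ledger v hv) hCVL'
        · exact le_trans (hInv.ledger w (Finset.mem_insert_of_mem hw'))
            (Finset.card_le_card (Finset.filter_subset_filter _ (Finset.subset_insert _ D)))

/-! ### interface to the tables T_k -/

def posOf (i : ℕ) : Pos := (layer i, i - mnum (layer i - 1))

lemma posOf_nid {t c : ℕ} (hc1 : 1 ≤ c) (hct : c ≤ t) : posOf (nid t c) = (t, c) := by
  have ht : 1 ≤ t := le_trans hc1 hct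
  have hl := layer_nid ht hc1 hct
  unfold posOf
  rw [hl]
  simp [nid]

lemma posOf_spec {k i : ℕ} (h1 : 1 ≤ i) (h2 : i ≤ mnum k) :
    nid (posOf i).1 (posOf i).2 = i ∧ PosOK k (posOf i) ∧ layer i = (posOf i).1 := by
  obtain ⟨t, c, hc1, hct, htk, rfl⟩ := exists_coords h1 h2
  rw [posOf_nid hc1 hct]
  exact ⟨rfl, ⟨hc1, hct, htk⟩, layer_nid (le_trans hc1 hct) hc1 hct⟩

def chi (S : Finset ℕ) : ℕ → ℕ := fun i => if i ∈ S then 1 else 0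

def Sids (P : Finset Pos) : Finset ℕ := P.image (fun p => nid p.1 p.2)

lemma nid_lt_lchild {t c : ℕ} (ht : 1 ≤ t) : nid t c < nid (t+1) c := by
  obtain ⟨s, rfl⟩ : ∃ s, t = s + 1 := ⟨t - 1, by omega⟩
  simp only [nid, Nat.add_sub_cancel, mnum_succ]
  omega

lemma nid_lt_rchild {t c : ℕ} (ht : 1 ≤ t) : nid t c < nid (t+1) (c+1) := by
  obtain ⟨s, rfl⟩ : ∃ s, t = s + 1 := ⟨t - 1, by omega⟩
  simp only [nid, Nat.add_sub_cancel, mnum_succ]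
  omega

lemma mem_rows_Tk {k : ℕ} {r : ℕ → ℕ} :
    r ∈ (Tk k).rows ↔ (∀ i ∈ Finset.Icc 1 (mnum k), r i < 2) ∧
      (∀ i ∉ Finset.Icc 1 (mnum k), r i = 0) := by
  constructor
  · exact fun h => (Tk k).rows_mem r h
  · rintro ⟨h1, h2⟩
    show r ∈ allRows 2 (Finset.Icc 1 (mnum k))
    unfold allRows
    rw [Finset.mem_image]
    refine ⟨fun i _ => r i, ?_, ?_⟩
    · rw [Finset.mem_pi]; intro i hi; rw [Finset.mem_range]; exact h1 i hi
    · funext i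
      by_cases h : i ∈ Finset.Icc 1 (mnum k)
      · simp [h]
      · simp [h, h2 i h]

lemma dec_Tk (k : ℕ) (r : ℕ → ℕ) :
    (Tk k).dec r = if (nuk k r).Nonempty then nuk k r else {0} := rfl

lemma mem_nuk {k d : ℕ} {r : ℕ → ℕ} : d ∈ nuk k r ↔ d < mnum k + 1 ∧
    (if d = 0 then r 1 = 0 else if layer d = k then r d = 1
      else r d = 1 ∧ r (lchild d) = 0 ∧ r (rchild d) = 0) := by
  unfold nuk
  rw [Finset.mem_filter, Finset.mem_range]

lemma nuk_nonempty_row {k : ℕ} {r : ℕ → ℕ} (h1 : ∀ i ∈ Finset.Icc 1 (mnum k), r i < 2)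
    (h2 : ∀ i ∉ Finset.Icc 1 (mnum k), r i = 0) : (nuk k r).Nonempty := by
  by_cases hr1 : r 1 = 0
  · exact ⟨0, mem_nuk.mpr ⟨by omega, by simp [hr1]⟩⟩
  · have h1m : 1 ∈ Finset.Icc 1 (mnum k) := by
      by_contra h; exact hr1 (h2 1 h)
    set S := (Finset.Icc 1 (mnum k)).filter (fun i => r i = 1) with hS
    have hne : S.Nonempty := ⟨1, Finset.mem_filter.mpr ⟨h1m, by have := h1 1 h1m; omega⟩⟩
    obtain ⟨i, hiS, hmax⟩ := S.exists_max_image id hne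
    obtain ⟨hiI, hri⟩ := Finset.mem_filter.mp hiS
    rw [Finset.mem_Icc] at hiI
    obtain ⟨t, c, hc1, hct, htk, rfl⟩ := exists_coords hiI.1 hiI.2
    have ht1 : 1 ≤ t := le_trans hc1 hct
    have hlay := layer_nid ht1 hc1 hct
    have hzero : ∀ j, nid t c < j → j ∈ Finset.Icc 1 (mnum k) → r j = 0 := by
      intro j hj hjI
      have hjlt := h1 j hjI
      by_contra hc'
      have : r j = 1 := by omega
      have : j ∈ S := Finset.mem_filter.mpr ⟨hjI, this⟩
      have := hmax j this
      simp only [id] at this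
      omega
    refine ⟨nid t c, mem_nuk.mpr ⟨by have := nid_le_mnum hct ht1; have := mnum_mono htk; omega, ?_⟩⟩
    rw [if_neg (by have := one_le_nid (t := t) hc1; omega)]
    by_cases hk : t = k
    · rw [if_pos (by rw [hlay, hk])]; exact hri
    · rw [if_neg (by rw [hlay]; omega)]
      have htk1 : t + 1 ≤ k := by omega
      refine ⟨hri, ?_, ?_⟩
      · rw [lchild_nid ht1 hc1 hct]
        refine hzero _ (nid_lt_lchild ht1) ?_
        rw [Finset.mem_Icc]
        exact ⟨one_le_nid hc1, le_trans (nid_le_mnum (by omega) (by omega)) (mnum_mono htk1)⟩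
      · rw [rchild_nid ht1 hc1 hct]
        refine hzero _ (nid_lt_rchild ht1) ?_
        rw [Finset.mem_Icc]
        exact ⟨one_le_nid (by omega), le_trans (nid_le_mnum (by omega) (by omega)) (mnum_mono htk1)⟩

def compatW (k : ℕ) (w : List (ℕ × ℕ)) (Z D : Finset Pos) : Prop :=
  ∀ q ∈ w, (1 ≤ q.1 ∧ q.1 ≤ mnum k) ∧ q.2 < 2 ∧
    (q.2 = 1 → posOf q.1 ∈ D \ Z) ∧ (q.2 = 0 → posOf q.1 ∈ Z)

lemma chi_mem_rows {k : ℕ} {P : Finset Pos} (hP : ∀ p ∈ P, PosOK k p) :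
    chi (Sids P) ∈ (Tk k).rows := by
  rw [mem_rows_Tk]
  constructor
  · intro i _; unfold chi; split <;> omega
  · intro i hi
    unfold chi
    rw [if_neg]
    intro hiS
    obtain ⟨p, hp, rfl⟩ := Finset.mem_image.mp hiS
    obtain ⟨hp1, hp2, hp3⟩ := hP p hp
    apply hi
    rw [Finset.mem_Icc]
    exact ⟨one_le_nid hp1, le_trans (nid_le_mnum hp2 (le_trans hp1 hp2)) (mnum_mono hp3)⟩

lemma chi_rowSat {k : ℕ} {w : List (ℕ × ℕ)} {Z D P : Finset Pos} (hcom : compatW k w Z D)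
    (hOP : D \ Z ⊆ P) (hPZ : ∀ p ∈ P, p ∉ Z) (hP : ∀ p ∈ P, PosOK k p) :
    Table.rowSat (chi (Sids P)) w := by
  intro q hq
  obtain ⟨⟨hq1, hq2⟩, hqlt, hq1', hq0'⟩ := hcom q hq
  have hps := posOf_spec hq1 hq2
  rcases (by omega : q.2 = 0 ∨ q.2 = 1) with h | h
  · rw [h]
    specialize hq0' h
    unfold chi
    rw [if_neg]
    intro hiS
    obtain ⟨p, hp, hpe⟩ := Finset.mem_image.mp hiS
    obtain ⟨hp1, hp2, _⟩ := hP p hp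
    have hpp : posOf q.1 = p := by rw [← hpe, posOf_nid hp1 hp2]
    exact hPZ p hp (hpp ▸ hq0')
  · rw [h]
    specialize hq1' h
    unfold chi
    rw [if_pos]
    rw [Sids, Finset.mem_image]
    exact ⟨posOf q.1, hOP hq1', hps.1⟩

/-- helper : a witness row from a protected position set -/
lemma witness_mem {k : ℕ} {w : List (ℕ × ℕ)} {Z D P : Finset Pos} (hcom : compatW k w Z D)
    (hOP : D \ Z ⊆ P) (hPZ : ∀ p ∈ P, p ∉ Z) (hP : ∀ p ∈ P, PosOK k p) :
    chi (Sids P) ∈ ((Tk k).applyWord w).rows ∧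
      (Tk k).dec (chi (Sids P)) = nuk k (chi (Sids P)) := by
  have hrow := chi_mem_rows (k := k) hP
  constructor
  · exact Finset.mem_filter.mpr ⟨hrow, chi_rowSat hcom hOP hPZ hP⟩
  · rw [dec_Tk, if_pos]
    rw [mem_rows_Tk] at hrow
    exact nuk_nonempty_row hrow.1 hrow.2

lemma PosOK_mk {k x y : ℕ} (h1 : 1 ≤ y) (h2 : y ≤ x) (h3 : x ≤ k) : PosOK k (x, y) :=
  ⟨h1, h2, h3⟩

lemma nid_mem_Sids {P : Finset Pos} {p : Pos} (hp : p ∈ P) : nid p.1 p.2 ∈ Sids P :=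
  Finset.mem_image.mpr ⟨p, hp, rfl⟩

/-- **no common decision** : under the invariant, every decision is refuted by
some row of the subtable -/
theorem no_common {k : ℕ} (hk : 2 ≤ k) {Z D : Finset Pos} (hInv : GInv k Z D)
    {w : List (ℕ × ℕ)} (hcom : compatW k w Z D) (d : ℕ) :
    ∃ r ∈ ((Tk k).applyWord w).rows, d ∉ (Tk k).dec r := by
  have hOZ : ∀ p ∈ D \ Z, p ∉ Z := fun p hp => (Finset.mem_sdiff.mp hp).2
  have hOOK : ∀ p ∈ D \ Z, PosOK k p := fun p hp => hInv.ok p (Finset.mem_sdiff.mp hp).1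
  by_cases hd0 : d = 0
  · -- witness with value 1 at the root
    subst hd0
    set P := insert rootP (D \ Z) with hP
    have hPZ : ∀ p ∈ P, p ∉ Z := by
      intro p hp
      rcases Finset.mem_insert.mp hp with rfl | hp
      · exact hInv.rootZ
      · exact hOZ p hp
    have hPOK : ∀ p ∈ P, PosOK k p := by
      intro p hp
      rcases Finset.mem_insert.mp hp with rfl | hp
      · exact ⟨le_refl _, le_refl _, by show 1 ≤ k; omega⟩
      · exact hOOK p hp
    obtain ⟨hmem, hdec⟩ := witness_mem hcom (Finset.subset_insert _ _) hPZ hPOK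
    refine ⟨_, hmem, ?_⟩
    rw [hdec]
    intro hcon
    obtain ⟨_, hcon2⟩ := mem_nuk.mp hcon
    rw [if_pos rfl] at hcon2
    have h1mem : (1 : ℕ) ∈ Sids P := by
      have := nid_mem_Sids (P := P) (p := rootP) (Finset.mem_insert_self _ _)
      rwa [show nid (rootP : Pos).1 (rootP : Pos).2 = 1 from nid_one_one] at this
    rw [show chi (Sids P) 1 = 1 from by unfold chi; rw [if_pos h1mem]] at hcon2
    omega
  · by_cases hdr : 1 ≤ d ∧ d ≤ mnum k
    · by_cases hdO : posOf d ∈ D \ Z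
      · -- d was answered 1 : use a live child
        obtain ⟨hrt, hdOK, hdlay⟩ := posOf_spec hdr.1 hdr.2
        set v := posOf d with hv
        have hvk := hInv.top v hdO
        have hlive := hInv.live v (Finset.mem_insert_of_mem hdO)
        obtain ⟨m, hm⟩ : ∃ m, k - v.1 = m + 1 := ⟨k - v.1 - 1, by omega⟩
        rw [hm] at hlive
        obtain ⟨x, hx⟩ := hlive
        simp only [Rf, Finset.mem_union] at hx
        obtain ⟨b1, b2, b3⟩ := hdOK
        have hchild : ∃ c' : Pos, c' ∉ Z ∧ PosOK k c' ∧
            (lchild d = nid c'.1 c'.2 ∨ rchild d = nid c'.1 c'.2) := by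
          rcases hx with hx | hx
          · split at hx
            · simp at hx
            · refine ⟨(v.1+1, v.2), by assumption,
                PosOK_mk b1 (by omega) (by omega), Or.inl ?_⟩
              rw [← hrt, lchild_nid (by omega) b1 b2]
          · split at hx
            · simp at hx
            · refine ⟨(v.1+1, v.2+1), by assumption,
                PosOK_mk (by omega) (by omega) (by omega), Or.inr ?_⟩
              rw [← hrt, rchild_nid (by omega) b1 b2]
        obtain ⟨c', hc'Z, hc'OK, hch⟩ := hchild
        set P := insert c' (D \ Z) with hP
        have hPZ : ∀ p ∈ P, p ∉ Z := by
          intro p hp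
          rcases Finset.mem_insert.mp hp with rfl | hp
          · exact hc'Z
          · exact hOZ p hp
        have hPOK : ∀ p ∈ P, PosOK k p := by
          intro p hp
          rcases Finset.mem_insert.mp hp with rfl | hp
          · exact hc'OK
          · exact hOOK p hp
        obtain ⟨hmem, hdec⟩ := witness_mem hcom (Finset.subset_insert _ _) hPZ hPOK
        refine ⟨_, hmem, ?_⟩
        rw [hdec]
        intro hcon
        obtain ⟨_, hcon2⟩ := mem_nuk.mp hcon
        rw [if_neg (by omega), if_neg (by rw [hdlay]; omega)] at hcon2
        have hcid : nid c'.1 c'.2 ∈ Sids P := nid_mem_Sids (Finset.mem_insert_self _ _)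
        have hchi : chi (Sids P) (nid c'.1 c'.2) = 1 := by unfold chi; rw [if_pos hcid]
        rcases hch with hch | hch
        · rw [hch, hchi] at hcon2
          omega
        · rw [hch, hchi] at hcon2
          omega
      · -- d was not answered 1 : zero witness
        set P := D \ Z with hP
        obtain ⟨hmem, hdec⟩ := witness_mem hcom (le_refl _) hOZ hOOK
        refine ⟨_, hmem, ?_⟩
        rw [hdec]
        intro hcon
        obtain ⟨_, hcon2⟩ := mem_nuk.mp hcon
        have hchi : chi (Sids P) d = 0 := by
          unfold chi
          rw [if_neg]
          intro hdS
          obtain ⟨p, hp, hpe⟩ := Finset.mem_image.mp hdS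
          obtain ⟨g1, g2, _⟩ := hOOK p hp
          exact hdO (by rw [← hpe, posOf_nid g1 g2]; exact hp)
        rw [if_neg hd0] at hcon2
        split at hcon2 <;> rw [hchi] at hcon2 <;> omega
    · -- d out of range
      obtain ⟨hmem, hdec⟩ := witness_mem hcom (le_refl _) hOZ hOOK
      refine ⟨_, hmem, ?_⟩
      rw [hdec]
      intro hcon
      obtain ⟨hlt, _⟩ := mem_nuk.mp hcon
      omega

/-! ### trees : depth, paths, the walk -/

def dep : DTree 2 → ℕ
  | .leaf _ => 0
  | .node _ _ _ ch => 1 + Finset.univ.sup (fun i => dep (ch i))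

lemma path_length_le_dep : ∀ (t : DTree 2), ∀ p ∈ DTree.paths t, p.1.length ≤ dep t := by
  intro t
  induction t with
  | leaf d =>
    intro p hp
    rw [DTree.paths, Set.mem_singleton_iff] at hp
    subst hp
    simp [dep]
  | node a n lab ch ih =>
    intro p hp
    rw [DTree.paths] at hp
    obtain ⟨i, hi⟩ := Set.mem_iUnion.mp hp
    obtain ⟨q, hq, rfl⟩ := hi
    have := ih i q hq
    have hsup : dep (ch i) ≤ Finset.univ.sup (fun i => dep (ch i)) := by
      simpa using Finset.le_sup (f := fun i => dep (ch i)) (Finset.mem_univ i)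
    simp only [dep, List.length_cons]
    omega

lemma exists_path_dep : ∀ (t : DTree 2), ∃ p ∈ DTree.paths t, dep t ≤ p.1.length := by
  intro t
  induction t with
  | leaf d => exact ⟨([], d), by rw [DTree.paths]; simp, by simp [dep]⟩
  | node a n lab ch ih =>
    obtain ⟨i, -, hieq⟩ := Finset.exists_mem_eq_sup Finset.univ
      (Finset.univ_nonempty) (fun i => dep (ch i))
    obtain ⟨q, hq, hqlen⟩ := ih i
    refine ⟨((a, lab i) :: q.1, q.2), ?_, ?_⟩
    · rw [DTree.paths]
      exact Set.mem_iUnion.mpr ⟨i, Set.mem_image_of_mem _ hq⟩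
    · simp only [dep, List.length_cons, ← hieq]
      omega

lemma rowSat_append {r : ℕ → ℕ} {w1 w2 : List (ℕ × ℕ)} :
    Table.rowSat r (w1 ++ w2) ↔ Table.rowSat r w1 ∧ Table.rowSat r w2 := by
  unfold Table.rowSat
  constructor
  · intro h
    exact ⟨fun q hq => h q (List.mem_append.mpr (Or.inl hq)),
      fun q hq => h q (List.mem_append.mpr (Or.inr hq))⟩
  · rintro ⟨h1, h2⟩ q hq
    rcases List.mem_append.mp hq with h | h
    exacts [h1 q h, h2 q h]

lemma compat_snoc {k : ℕ} {w : List (ℕ × ℕ)} {Z D Z' D' : Finset Pos} {a b : ℕ}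
    (hcom : compatW k w Z D) (hZ : Z ⊆ Z') (hD : D \ Z ⊆ D' \ Z')
    (ha : 1 ≤ a ∧ a ≤ mnum k) (hb : b < 2)
    (h1 : b = 1 → posOf a ∈ D' \ Z') (h0 : b = 0 → posOf a ∈ Z') :
    compatW k (w ++ [(a, b)]) Z' D' := by
  intro q hq
  rcases List.mem_append.mp hq with h | h
  · obtain ⟨hq1, hq2, hq3, hq4⟩ := hcom q h
    exact ⟨hq1, hq2, fun e => hD (hq3 e), fun e => hZ (hq4 e)⟩
  · simp only [List.mem_singleton] at h
    subst h
    exact ⟨ha, hb, h1, h0⟩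

/-- the main walk : following the adversary through a deterministic tree -/
lemma walk {k : ℕ} (hk : 2 ≤ k) : ∀ (t : DTree 2), DTree.det t →
    (DTree.attrs t ⊆ Finset.Icc 1 (mnum k)) →
    ∀ (Z D : Finset Pos) (w : List (ℕ × ℕ)),
    GInv k Z D → compatW k w Z D → D.card + dep t + 2 ≤ k →
    (∀ r ∈ (Tk k).rows, Table.rowSat r w → ∃ p ∈ DTree.paths t, Table.rowSat r p.1) →
    ∃ p ∈ DTree.paths t, ∃ Z' D' : Finset Pos, GInv k Z' D' ∧ compatW k (w ++ p.1) Z' D' := by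
  intro t
  induction t with
  | leaf d =>
    intro _ _ Z D w hInv hcom _ _
    exact ⟨([], d), by rw [DTree.paths]; simp, Z, D, hInv, by simpa using hcom⟩
  | node a n lab ch ih =>
    intro hdet hattrs Z D w hInv hcom hbud hcov
    obtain ⟨hlabinj, hdetch⟩ := hdet
    have haI : a ∈ Finset.Icc 1 (mnum k) := hattrs (by rw [DTree.attrs]; exact Finset.mem_insert_self _ _)
    rw [Finset.mem_Icc] at haI
    obtain ⟨hrt, hapOK, _⟩ := posOf_spec haI.1 haI.2
    set ap := posOf a with hap
    set b := ansP k Z D ap with hbdef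
    have hb01 : b = 0 ∨ b = 1 := by
      rw [hbdef]; unfold ansP
      split
      · split
        · exact Or.inl rfl
        · exact Or.inr rfl
      · split
        · exact Or.inr rfl
        · exact Or.inl rfl
    -- the new state
    have hstate : ∃ Z' D' : Finset Pos, GInv k Z' D' ∧ Z ⊆ Z' ∧ D \ Z ⊆ D' \ Z' ∧
        D'.card ≤ D.card + 1 ∧
        (b = 1 → ap ∈ D' \ Z') ∧ (b = 0 → ap ∈ Z') := by
      by_cases hrep : ap ∈ D
      · refine ⟨Z, D, hInv, le_refl _, le_refl _, by omega, ?_, ?_⟩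
        · intro h1
          rw [hbdef] at h1
          unfold ansP at h1
          rw [if_pos hrep] at h1
          split at h1
          · omega
          · exact Finset.mem_sdiff.mpr ⟨hrep, by assumption⟩
        · intro h0
          rw [hbdef] at h0
          unfold ansP at h0
          rw [if_pos hrep] at h0
          split at h0
          · assumption
          · omega
      · have hdep : 1 ≤ dep (DTree.node a n lab ch) := by rw [dep]; omega
        by_cases hforce : Forced k Z D ap
        · have hb1 : b = 1 := by
            rw [hbdef]; unfold ansP; rw [if_neg hrep, if_pos hforce]
          have hInv' := inv_step_one hk hInv hapOK hrep hforce (by omega)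
          refine ⟨Z, insert ap D, hInv', le_refl _, ?_, by
            rw [Finset.card_insert_of_notMem hrep], ?_, ?_⟩
          · intro x hx
            rw [Finset.mem_sdiff] at hx ⊢
            exact ⟨Finset.mem_insert_of_mem hx.1, hx.2⟩
          · intro _
            rw [Finset.mem_sdiff]
            exact ⟨Finset.mem_insert_self _ _, fun h => hrep (hInv.sub h)⟩
          · intro h0; omega
        · have hb0 : b = 0 := by
            rw [hbdef]; unfold ansP; rw [if_neg hrep, if_neg hforce]
          have hInv' := inv_step_zero hInv hapOK hrep hforce
          refine ⟨insert ap Z, insert ap D, hInv', Finset.subset_insert _ _, ?_, by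
            rw [Finset.card_insert_of_notMem hrep], by intro h1; omega, ?_⟩
          · intro x hx
            rw [Finset.mem_sdiff] at hx ⊢
            refine ⟨Finset.mem_insert_of_mem hx.1, ?_⟩
            rw [Finset.mem_insert]
            rintro (rfl | h)
            · exact hrep hx.1
            · exact hx.2 h
          · intro _
            exact Finset.mem_insert_self _ _
    obtain ⟨Z', D', hInv', hZZ, hDD, hDc, hb1, hb0⟩ := hstate
    -- find the edge carrying the answer b
    by_cases hesc : ∃ i, lab i = b
    · obtain ⟨i, hi⟩ := hesc
      have hw' : compatW k (w ++ [(a, b)]) Z' D' :=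
        compat_snoc hcom hZZ hDD haI (by omega) hb1 hb0
      have hcov' : ∀ r ∈ (Tk k).rows, Table.rowSat r (w ++ [(a, b)]) →
          ∃ p ∈ DTree.paths (ch i), Table.rowSat r p.1 := by
        intro r hr hsat
        obtain ⟨p, hp, hpsat⟩ := hcov r hr (rowSat_append.mp hsat).1
        rw [DTree.paths] at hp
        obtain ⟨j, hj⟩ := Set.mem_iUnion.mp hp
        obtain ⟨q, hq, rfl⟩ := hj
        have hra : r a = lab j := hpsat (a, lab j) List.mem_cons_self
        have hrb : r a = b := by
          have := (rowSat_append.mp hsat).2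
          exact this (a, b) (List.mem_singleton.mpr rfl)
        have : j = i := hlabinj (by rw [← hra, hrb, hi])
        subst this
        exact ⟨q, hq, fun x hx => hpsat x (List.mem_cons_of_mem _ hx)⟩
      have hattrs' : DTree.attrs (ch i) ⊆ Finset.Icc 1 (mnum k) := by
        intro x hx
        apply hattrs
        rw [DTree.attrs]
        exact Finset.mem_insert_of_mem (Finset.mem_biUnion.mpr ⟨i, Finset.mem_univ _, hx⟩)
      have hbud' : D'.card + dep (ch i) + 2 ≤ k := by
        have hnode : dep (DTree.node a n lab ch) = 1 + Finset.univ.sup (fun j => dep (ch j)) := rfl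
        have hle : dep (ch i) ≤ Finset.univ.sup (fun j => dep (ch j)) := by
          simpa using Finset.le_sup (f := fun j => dep (ch j)) (Finset.mem_univ i)
        omega
      obtain ⟨q, hq, Z'', D'', hInv'', hcom''⟩ :=
        ih i (hdetch i) hattrs' Z' D' (w ++ [(a, b)]) hInv' hw' hbud' hcov'
      refine ⟨((a, lab i) :: q.1, q.2), ?_, Z'', D'', hInv'', ?_⟩
      · rw [DTree.paths]
        exact Set.mem_iUnion.mpr ⟨i, Set.mem_image_of_mem _ hq⟩
      · rw [hi]
        rwa [List.append_assoc, List.singleton_append] at hcom''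
    · -- stuck : contradiction with coverage
      exfalso
      push_neg at hesc
      have hOZ : ∀ p ∈ D \ Z, p ∉ Z := fun p hp => (Finset.mem_sdiff.mp hp).2
      have hOOK : ∀ p ∈ D \ Z, PosOK k p := fun p hp => hInv.ok p (Finset.mem_sdiff.mp hp).1
      -- build a row answering b at a and satisfying w
      have hrow : ∃ r ∈ (Tk k).rows, Table.rowSat r w ∧ r a = b := by
        rcases hb01 with hb | hb
        · refine ⟨chi (Sids (D \ Z)), chi_mem_rows hOOK,
            chi_rowSat hcom (le_refl _) hOZ hOOK, ?_⟩
          rw [hb]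
          unfold chi
          rw [if_neg]
          intro hmem
          obtain ⟨p, hp, hpe⟩ := Finset.mem_image.mp hmem
          obtain ⟨g1, g2, _⟩ := hOOK p hp
          have hαp : ap = p := by rw [hap, ← hpe, posOf_nid g1 g2]
          have hpD : ap ∈ D := by rw [hαp]; exact (Finset.mem_sdiff.mp hp).1
          have hpZ : ap ∉ Z := by rw [hαp]; exact (Finset.mem_sdiff.mp hp).2
          have hb1' : b = 1 := by rw [hbdef]; unfold ansP; rw [if_pos hpD, if_neg hpZ]
          omega
        · have hapZ : ap ∉ Z := by
            intro hz
            specialize hb1 hb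
            exact (Finset.mem_sdiff.mp hb1).2 (hZZ hz)
          have hPZ : ∀ p ∈ insert ap (D \ Z), p ∉ Z := by
            intro p hp
            rcases Finset.mem_insert.mp hp with rfl | hp
            · exact hapZ
            · exact hOZ p hp
          have hPOK : ∀ p ∈ insert ap (D \ Z), PosOK k p := by
            intro p hp
            rcases Finset.mem_insert.mp hp with rfl | hp
            · exact hapOK
            · exact hOOK p hp
          refine ⟨chi (Sids (insert ap (D \ Z))), chi_mem_rows hPOK,
            chi_rowSat hcom (Finset.subset_insert _ _) hPZ hPOK, ?_⟩
          rw [hb]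
          unfold chi
          rw [if_pos]
          have := nid_mem_Sids (P := insert ap (D \ Z)) (Finset.mem_insert_self _ _)
          rwa [hrt] at this
      obtain ⟨r, hr, hrsat, hra⟩ := hrow
      obtain ⟨p, hp, hpsat⟩ := hcov r hr hrsat
      rw [DTree.paths] at hp
      obtain ⟨j, hj⟩ := Set.mem_iUnion.mp hp
      obtain ⟨q, hq, rfl⟩ := hj
      have : r a = lab j := hpsat (a, lab j) List.mem_cons_self
      exact hesc j (by rw [← this, hra])

/-! ### the lower bound for deterministic decision trees -/

lemma KTree_paths_eq {Γ : KTree 2} (hn : Γ.n = 0) :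
    ∀ i : Fin (Γ.n + 1), Γ.paths = DTree.paths (Γ.sub i) := by
  intro i
  have huniq : ∀ j : Fin (Γ.n + 1), j = i := by
    intro j
    ext
    omega
  ext p
  constructor
  · intro hp
    obtain ⟨j, hj⟩ := Set.mem_iUnion.mp hp
    rwa [huniq j] at hj
  · intro hp
    exact Set.mem_iUnion.mpr ⟨i, hp⟩

lemma onWord_depth (α : List (ℕ × ℕ)) : PBCM.onWord depthCM.toPBCM α = α.length := by
  unfold PBCM.onWord
  show (α.map Prod.fst).length = α.length
  exact List.length_map _

/-- any deterministic decision tree for T_k has depth at least k - 1 -/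
theorem ddt_lower {k : ℕ} (hk : 2 ≤ k) (Γ : KTree 2) (hΓ : isDDT (Tk k) Γ) :
    k - 1 ≤ treeComp depthCM.toPBCM Γ := by
  by_contra hcon
  push_neg at hcon
  obtain ⟨⟨hrows, hwf, hattrs, hcov, hpaths⟩, hn, hdet⟩ := hΓ
  set i0 : Fin (Γ.n + 1) := ⟨0, by omega⟩ with hi0
  set t := Γ.sub i0 with ht
  have hU := KTree_paths_eq hn i0
  -- every path of the tree is short
  have hbdd : ∀ c ∈ {c | ∃ p ∈ Γ.paths, PBCM.onWord depthCM.toPBCM p.1 = c}, c ≤ dep t := by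
    rintro c ⟨p, hp, rfl⟩
    rw [onWord_depth]
    exact path_length_le_dep t p (by rwa [← hU])
  have hdepth : dep t ≤ treeComp depthCM.toPBCM Γ := by
    obtain ⟨p0, hp0, hlen⟩ := exists_path_dep t
    have hmem : p0.1.length ∈ {c | ∃ p ∈ Γ.paths, PBCM.onWord depthCM.toPBCM p.1 = c} :=
      ⟨p0, by rwa [hU], onWord_depth _⟩
    exact le_trans hlen (le_csSup ⟨dep t, hbdd⟩ hmem)
  have hdep : dep t + 2 ≤ k := by omega
  -- run the walk
  have hattrs' : DTree.attrs t ⊆ Finset.Icc 1 (mnum k) := by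
    intro x hx
    exact hattrs (Finset.mem_biUnion.mpr ⟨i0, Finset.mem_univ _, hx⟩)
  have hcov' : ∀ r ∈ (Tk k).rows, Table.rowSat r ([] : List (ℕ × ℕ)) →
      ∃ p ∈ DTree.paths t, Table.rowSat r p.1 := by
    intro r hr _
    obtain ⟨p, hp, hsat⟩ := hcov r hr
    exact ⟨p, by rwa [← hU], hsat⟩
  obtain ⟨p, hp, Z', D', hInv', hcom'⟩ := walk hk t (hdet i0) hattrs' ∅ ∅ []
    (inv_init k) (by intro q hq; simp at hq) (by simpa using hdep) hcov'
  rw [List.nil_append] at hcom'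
  -- contradiction with the path condition
  have hpΓ : p ∈ Γ.paths := by rwa [hU]
  obtain ⟨r, hr, hnd⟩ := no_common hk hInv' hcom' p.2
  rcases hpaths p hpΓ with hemp | hcommon
  · rw [hemp] at hr
    simp at hr
  · exact hnd (hcommon r hr)

/-! ### existence of a deterministic decision tree for T_k -/

def normRow (k : ℕ) (w : List (ℕ × ℕ)) : ℕ → ℕ := fun i =>
  if i ∈ Finset.Icc 1 (mnum k) ∧ (i, 1) ∈ w then 1 else 0

lemma normRow_mem_rows (k : ℕ) (w : List (ℕ × ℕ)) : normRow k w ∈ (Tk k).rows := by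
  rw [mem_rows_Tk]
  constructor
  · intro i _; unfold normRow; split <;> omega
  · intro i hi; unfold normRow; rw [if_neg]; rintro ⟨h, _⟩; exact hi h

def buildDT (k : ℕ) : List ℕ → List (ℕ × ℕ) → DTree 2
  | [], w => .leaf (sInf ↑((Tk k).dec (normRow k w)))
  | a :: rest, w => .node a 1 (fun i => (i : ℕ)) (fun i => buildDT k rest (w ++ [(a, (i : ℕ))]))

lemma buildDT_det (k : ℕ) : ∀ (L : List ℕ) (w : List (ℕ × ℕ)), DTree.det (buildDT k L w) := by
  intro L
  induction L with
  | nil => intro w; rw [buildDT, DTree.det]; trivial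
  | cons a rest ih =>
    intro w
    rw [buildDT, DTree.det]
    exact ⟨fun i j h => Fin.ext h, fun i => ih _⟩

lemma buildDT_wf (k : ℕ) : ∀ (L : List ℕ) (w : List (ℕ × ℕ)), DTree.wf (buildDT k L w) := by
  intro L
  induction L with
  | nil => intro w; rw [buildDT, DTree.wf]; trivial
  | cons a rest ih =>
    intro w
    rw [buildDT, DTree.wf]
    exact ⟨fun i => i.isLt, fun i => ih _⟩

lemma buildDT_attrs (k : ℕ) : ∀ (L : List ℕ) (w : List (ℕ × ℕ)),
    DTree.attrs (buildDT k L w) ⊆ L.toFinset := by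
  intro L
  induction L with
  | nil => intro w; rw [buildDT, DTree.attrs]; simp
  | cons a rest ih =>
    intro w x hx
    rw [buildDT, DTree.attrs] at hx
    rcases Finset.mem_insert.mp hx with rfl | hx
    · simp
    · obtain ⟨i, _, hxi⟩ := Finset.mem_biUnion.mp hx
      have := ih (w ++ [(a, (i : ℕ))]) hxi
      simp at this ⊢
      exact Or.inr this

lemma buildDT_cover (k : ℕ) : ∀ (L : List ℕ) (w : List (ℕ × ℕ)) (r : ℕ → ℕ),
    r ∈ (Tk k).rows → (∀ x ∈ L, x ∈ Finset.Icc 1 (mnum k)) →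
    ∃ p ∈ DTree.paths (buildDT k L w), Table.rowSat r p.1 := by
  intro L
  induction L with
  | nil =>
    intro w r _ _
    exact ⟨(([] : List (ℕ × ℕ)), sInf ↑((Tk k).dec (normRow k w))),
      by rw [buildDT, DTree.paths]; simp, by intro q hq; simp at hq⟩
  | cons a rest ih =>
    intro w r hr hL
    have hra : r a < 2 := (mem_rows_Tk.mp hr).1 a (hL a List.mem_cons_self)
    set i : Fin 2 := ⟨r a, hra⟩ with hidef
    obtain ⟨q, hq, hqsat⟩ := ih (w ++ [(a, (i : ℕ))]) r hr
      (fun x hx => hL x (List.mem_cons_of_mem _ hx))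
    refine ⟨((a, (i : ℕ)) :: q.1, q.2), ?_, ?_⟩
    · rw [buildDT, DTree.paths]
      exact Set.mem_iUnion.mpr ⟨i, Set.mem_image_of_mem _ hq⟩
    · intro x hx
      rcases List.mem_cons.mp hx with rfl | hx
      · rfl
      · exact hqsat x hx

lemma buildDT_pathcond (k : ℕ) : ∀ (L : List ℕ) (w : List (ℕ × ℕ)),
    (∀ i ∈ Finset.Icc 1 (mnum k), i ∈ L ∨ ∃ b, (i, b) ∈ w) →
    ∀ p ∈ DTree.paths (buildDT k L w),
    ∀ r ∈ ((Tk k).applyWord (w ++ p.1)).rows, p.2 ∈ (Tk k).dec r := by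
  intro L
  induction L with
  | nil =>
    intro w hcover p hp r hr
    rw [buildDT, DTree.paths, Set.mem_singleton_iff] at hp
    subst hp
    obtain ⟨hrow, hsat⟩ := Finset.mem_filter.mp hr
    rw [List.append_nil] at hsat
    have hreq : r = normRow k w := by
      funext j
      by_cases hj : j ∈ Finset.Icc 1 (mnum k)
      · obtain ⟨b, hb⟩ := (hcover j hj).resolve_left (by simp)
        have hrb : r j = b := hsat (j, b) hb
        by_cases h1 : (j, 1) ∈ w
        · have : r j = 1 := hsat (j, 1) h1
          rw [this]
          unfold normRow
          rw [if_pos ⟨hj, h1⟩]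
        · have hblt : r j < 2 := (mem_rows_Tk.mp hrow).1 j hj
          have hbne : b ≠ 1 := by rintro rfl; exact h1 hb
          unfold normRow
          rw [if_neg (by rintro ⟨_, h⟩; exact h1 h)]
          omega
      · rw [(mem_rows_Tk.mp hrow).2 j hj]
        unfold normRow
        rw [if_neg (by rintro ⟨h, _⟩; exact hj h)]
    show sInf ↑((Tk k).dec (normRow k w)) ∈ (Tk k).dec r
    rw [hreq]
    have hne : ((Tk k).dec (normRow k w) : Set ℕ).Nonempty := by
      rw [Finset.coe_nonempty]
      exact (Tk k).dec_nonempty _ (normRow_mem_rows k w)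
    have := Nat.sInf_mem hne
    exact_mod_cast this
  | cons a rest ih =>
    intro w hcover p hp r hr
    rw [buildDT, DTree.paths] at hp
    obtain ⟨i, hi⟩ := Set.mem_iUnion.mp hp
    obtain ⟨q, hq, rfl⟩ := hi
    have hcover' : ∀ j ∈ Finset.Icc 1 (mnum k),
        j ∈ rest ∨ ∃ b, (j, b) ∈ w ++ [(a, (i : ℕ))] := by
      intro j hj
      rcases hcover j hj with hjl | ⟨b, hb⟩
      · rcases List.mem_cons.mp hjl with rfl | hjl
        · exact Or.inr ⟨(i : ℕ), List.mem_append.mpr (Or.inr (List.mem_singleton.mpr rfl))⟩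
        · exact Or.inl hjl
      · exact Or.inr ⟨b, List.mem_append.mpr (Or.inl hb)⟩
    have hr' : r ∈ ((Tk k).applyWord ((w ++ [(a, (i : ℕ))]) ++ q.1)).rows := by
      obtain ⟨h1, h2⟩ := Finset.mem_filter.mp hr
      refine Finset.mem_filter.mpr ⟨h1, ?_⟩
      rwa [List.append_assoc, List.singleton_append]
    exact ih (w ++ [(a, (i : ℕ))]) hcover' q hq r hr'

/-- a complete deterministic decision tree for T_k -/
def Gamma0 (k : ℕ) : KTree 2 :=
  ⟨0, fun _ => buildDT k ((Finset.Icc 1 (mnum k)).sort (· ≤ ·)) []⟩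

lemma Gamma0_isDDT (k : ℕ) : isDDT (Tk k) (Gamma0 k) := by
  have hsort : ∀ x, x ∈ (Finset.Icc 1 (mnum k)).sort (· ≤ ·) ↔ x ∈ Finset.Icc 1 (mnum k) :=
    fun x => Finset.mem_sort _
  refine ⟨⟨⟨normRow k [], normRow_mem_rows k []⟩, fun i => buildDT_wf k _ _, ?_, ?_, ?_⟩,
    rfl, fun i => buildDT_det k _ _⟩
  · intro x hx
    obtain ⟨i, _, hxi⟩ := Finset.mem_biUnion.mp hx
    have := buildDT_attrs k _ _ hxi
    rw [List.mem_toFinset, hsort] at this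
    exact this
  · intro r hr
    obtain ⟨p, hp, hsat⟩ := buildDT_cover k _ [] r hr (fun x hx => (hsort x).mp hx)
    exact ⟨p, Set.mem_iUnion.mpr ⟨⟨0, by omega⟩, hp⟩, hsat⟩
  · intro p hp
    right
    obtain ⟨i, hi⟩ := Set.mem_iUnion.mp hp
    have := buildDT_pathcond k _ [] (fun j hj => Or.inl ((hsort j).mpr hj)) p hi
    simpa using this

end Aux

/-- **Lemma (7M6).** For any `k ≥ 1`, `h^d(T_k) ≥ k − 1`. -/
theorem stmt12 (k : ℕ) (hk : 1 ≤ k) : k - 1 ≤ psiD depthCM.toPBCM (Tk k) := by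
  rcases Nat.lt_or_ge k 2 with h | h
  · have h0 : k - 1 = 0 := by omega
    rw [h0]
    exact Nat.zero_le _
  · unfold psiD
    have hne : {c | ∃ Γ : KTree 2, isDDT (Tk k) Γ ∧ treeComp depthCM.toPBCM Γ = c}.Nonempty :=
      ⟨_, Gamma0 k, Gamma0_isDDT k, rfl⟩
    obtain ⟨Γ, hΓ, hc⟩ := Nat.sInf_mem hne
    rw [← hc]
    exact ddt_lower h Γ hΓ
end

section
/- For any nonempty decision table T ∈ M_2^∞, N(T) ≤ (4·W(T))^{Z(T)}. -/
open Classical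

lemma Zt_le_card (T : Table 2) :
    ∀ c ∈ {c | ∃ Q ∈ Table.closureT T, isComplete Q ∧ Q.WT = c}, c ≤ T.attrs.card := by
  intro c hc
  obtain ⟨Q, ⟨D, hD, hA, hR⟩, _, rfl⟩ := hc
  unfold Table.WT
  split
  · exact Nat.zero_le _
  · rw [hA]; exact Finset.card_le_card (Finset.sdiff_subset)

lemma Zt_bdd (T : Table 2) :
    BddAbove {c | ∃ Q ∈ Table.closureT T, isComplete Q ∧ Q.WT = c} :=
  ⟨T.attrs.card, Zt_le_card T⟩

lemma shattered_le_Zt (T : Table 2) (hne : T.rows.Nonempty) (s : Finset ℕ)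
    (hs : s ⊆ T.attrs)
    (hsh : (T.rows.image (fun r => T.attrs.filter (fun i => r i = 1))).Shatters s) :
    s.card ≤ Zt T := by
  set proj : (ℕ → ℕ) → (ℕ → ℕ) := fun r i => if i ∈ s then r i else 0 with hproj
  have hAeq : T.attrs \ (T.attrs \ s) = s := by
    rw [sdiff_sdiff_right_self]; exact inf_eq_right.mpr hs
  refine le_csSup (Zt_bdd T) ?_
  refine ⟨⟨s, T.rows.image proj, fun _ => {0}, ?_, fun _ _ => ⟨0, by simp⟩⟩, ?_, ?_, ?_⟩
  · intro r' hr'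
    obtain ⟨r, hr, rfl⟩ := Finset.mem_image.mp hr'
    refine ⟨fun i hi => ?_, fun i hi => ?_⟩
    · simp only [proj, hi, if_pos]
      exact (T.rows_mem r hr).1 i (hs hi)
    · simp [proj, hi]
  · refine ⟨T.attrs \ s, Finset.sdiff_subset, hAeq.symm, ?_⟩
    simp only [hAeq]
    rfl
  · -- completeness
    show (T.rows.image proj).card = 2 ^ s.card
    set F : (ℕ → ℕ) → Finset ℕ := fun r' => s.filter (fun i => r' i = 1) with hF
    have key : ∀ t ⊆ s, ∃ r ∈ T.rows, s.filter (fun i => r i = 1) = t := by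
      intro t ht
      obtain ⟨u, hu, hsu⟩ := hsh ht
      obtain ⟨r, hr, rfl⟩ := Finset.mem_image.mp hu
      refine ⟨r, hr, ?_⟩
      rw [← hsu]; ext i
      simp only [Finset.mem_filter, Finset.mem_inter]
      exact ⟨fun ⟨h1, h2⟩ => ⟨h1, hs h1, h2⟩, fun ⟨h1, _, h3⟩ => ⟨h1, h3⟩⟩
    have himg : (T.rows.image proj).image F = s.powerset := by
      apply Finset.Subset.antisymm
      · intro t ht
        obtain ⟨r', _, rfl⟩ := Finset.mem_image.mp ht
        exact Finset.mem_powerset.mpr (Finset.filter_subset _ _)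
      · intro t ht
        obtain ⟨r, hr, hfr⟩ := key t (Finset.mem_powerset.mp ht)
        refine Finset.mem_image.mpr ⟨proj r, Finset.mem_image_of_mem _ hr, ?_⟩
        rw [← hfr]
        apply Finset.filter_congr
        intro i hi
        simp [proj, hi]
    have hinj : Set.InjOn F (T.rows.image proj : Finset (ℕ → ℕ)) := by
      intro r1 h1 r2 h2 hFe
      obtain ⟨a, ha, rfl⟩ := Finset.mem_image.mp h1
      obtain ⟨b, hb, rfl⟩ := Finset.mem_image.mp h2
      funext i
      by_cases hi : i ∈ s
      · have ha2 : a i < 2 := (T.rows_mem a ha).1 i (hs hi)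
        have hb2 : b i < 2 := (T.rows_mem b hb).1 i (hs hi)
        have : (i ∈ F (proj a)) ↔ (i ∈ F (proj b)) := by rw [hFe]
        simp only [F, Finset.mem_filter, proj, hi, if_pos, true_and, hi] at this
        simp only [proj, hi, if_pos]
        omega
      · simp [proj, hi]
    calc (T.rows.image proj).card = ((T.rows.image proj).image F).card :=
          (Finset.card_image_of_injOn hinj).symm
      _ = 2 ^ s.card := by rw [himg, Finset.card_powerset]
  · -- WT = s.card
    show Table.WT _ = s.card
    have hnz : (T.rows.image proj) ≠ ∅ := (hne.image proj).ne_empty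
    simp [Table.WT, hnz]


/-- **Lemma (7M7).** For any nonempty table `T ∈ M_2^∞`, `N(T) ≤ (4·W(T))^{Z(T)}`. -/
theorem stmt13 (T : Table 2) (h : T.rows ≠ ∅) : T.NT ≤ (4 * T.WT) ^ Zt T := by
  have hne : T.rows.Nonempty := Finset.nonempty_iff_ne_empty.mpr h
  have hWT : T.WT = T.attrs.card := if_neg h
  set W := T.attrs.card
  set Z := Zt T with hZ
  set f : (ℕ → ℕ) → Finset ℕ := fun r => T.attrs.filter (fun i => r i = 1) with hf
  set 𝒜 := T.rows.image f with h𝒜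
  have hinjf : Set.InjOn f (T.rows : Set (ℕ → ℕ)) := by
    intro a ha b hb hab
    funext i
    by_cases hi : i ∈ T.attrs
    · have ha2 : a i < 2 := (T.rows_mem a ha).1 i hi
      have hb2 : b i < 2 := (T.rows_mem b hb).1 i hi
      have : (i ∈ f a) ↔ (i ∈ f b) := by rw [hab]
      simp only [f, Finset.mem_filter, hi, true_and] at this
      omega
    · rw [(T.rows_mem a ha).2 i hi, (T.rows_mem b hb).2 i hi]
  have hcard : T.NT = 𝒜.card := (Finset.card_image_of_injOn hinjf).symm
  -- every shattered set has small card and is a subset of attrs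
  have hsub : 𝒜.shatterer ⊆ T.attrs.powerset.filter (fun st => st.card ≤ Z) := by
    intro s hsmem
    have hsh : 𝒜.Shatters s := Finset.mem_shatterer.mp hsmem
    obtain ⟨t, ht, hst⟩ := hsh.exists_superset
    obtain ⟨r, hr, rfl⟩ := Finset.mem_image.mp ht
    have hs : s ⊆ T.attrs := hst.trans (Finset.filter_subset _ _)
    exact Finset.mem_filter.mpr ⟨Finset.mem_powerset.mpr hs,
      shattered_le_Zt T hne s hs hsh⟩
  have hZleW : Z ≤ W := by
    rcases Set.eq_empty_or_nonempty {c | ∃ Q ∈ Table.closureT T, isComplete Q ∧ Q.WT = c}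
      with he | hne'
    · rw [hZ]; unfold Zt; rw [he, csSup_empty]; exact Nat.zero_le _
    · exact csSup_le hne' (Zt_le_card T)
  have count : (T.attrs.powerset.filter (fun st => st.card ≤ Z)).card
      ≤ ∑ i ∈ Finset.range (Z + 1), W.choose i := by
    have heq : T.attrs.powerset.filter (fun st => st.card ≤ Z)
        = (Finset.range (Z + 1)).biUnion (fun i => T.attrs.powersetCard i) := by
      ext st
      simp only [Finset.mem_filter, Finset.mem_powerset, Finset.mem_biUnion,
        Finset.mem_range, Finset.mem_powersetCard, Nat.lt_succ_iff]
      constructor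
      · rintro ⟨h1, h2⟩; exact ⟨st.card, h2, h1, rfl⟩
      · rintro ⟨i, hi, h1, rfl⟩; exact ⟨h1, hi⟩
    rw [heq]
    refine (Finset.card_biUnion_le).trans ?_
    apply Finset.sum_le_sum
    intro i _
    rw [Finset.card_powersetCard]
  rw [hcard]
  refine le_trans (Finset.card_le_card_shatterer 𝒜) ?_
  refine le_trans (Finset.card_le_card hsub) ?_
  refine le_trans count ?_
  -- now the numeric bound
  by_cases hW : W = 0
  · -- then Z = 0
    have hZ0 : Z = 0 := by omega
    rw [hZ0, hW]; simp
  · have hW1 : 1 ≤ W := Nat.one_le_iff_ne_zero.mpr hW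
    calc ∑ i ∈ Finset.range (Z + 1), W.choose i
        ≤ ∑ _i ∈ Finset.range (Z + 1), W ^ Z := by
          apply Finset.sum_le_sum
          intro i hi
          exact (Nat.choose_le_pow W i).trans
            (Nat.pow_le_pow_right hW1 (Nat.lt_succ_iff.mp (Finset.mem_range.mp hi)))
      _ = (Z + 1) * W ^ Z := by rw [Finset.sum_const, Finset.card_range, smul_eq_mul]
      _ ≤ 4 ^ Z * W ^ Z := by
          apply Nat.mul_le_mul_right
          calc Z + 1 ≤ 2 ^ Z := Nat.lt_two_pow_self
            _ ≤ 4 ^ Z := Nat.pow_le_pow_left (by norm_num) Z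
      _ = (4 * W) ^ Z := (mul_pow 4 W Z).symm
      _ = (4 * T.WT) ^ Z := by rw [hWT]
end

section
/- Let A be a nontrivial closed class of decision tables from M_2^∞ and ψ a bounded complexity measure. If the function Z_{ψ,A} is not everywhere defined, then the function H^∞_{ψ,A} is not everywhere defined. -/
open Classical

noncomputable section Aux
open Classical

namespace DTree

lemma paths_finite {k : ℕ} (t : DTree k) : t.paths.Finite := by
  induction t with
  | leaf d => exact Set.finite_singleton _
  | node a n lab ch ih => exact Set.finite_iUnion fun i => (ih i).image _

lemma paths_nonempty {k : ℕ} (t : DTree k) : t.paths.Nonempty := by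
  induction t with
  | leaf d => exact ⟨_, rfl⟩
  | node a n lab ch ih =>
    obtain ⟨p, hp⟩ := ih 0
    exact ⟨_, Set.mem_iUnion.mpr ⟨0, Set.mem_image_of_mem _ hp⟩⟩

/-- the paths of a decision tree, as a Finset -/
def pathsF {k : ℕ} : DTree k → Finset (List (ℕ × ℕ) × ℕ)
  | .leaf d => {([], d)}
  | .node a _ lab ch => Finset.univ.biUnion fun i =>
      (pathsF (ch i)).image (fun p => ((a, lab i) :: p.1, p.2))

lemma coe_pathsF {k : ℕ} (t : DTree k) : (t.pathsF : Set (List (ℕ × ℕ) × ℕ)) = t.paths := by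
  induction t with
  | leaf d => simp [pathsF, paths]
  | node a n lab ch ih =>
    simp only [pathsF, paths, Finset.coe_biUnion, Finset.coe_image, Finset.mem_coe,
      Finset.mem_univ, Set.iUnion_true, ih]

lemma nonroot_le_two {n : ℕ} {lab : Fin (n+1) → ℕ} (hlt : ∀ i, lab i < 2)
    (hinj : Function.Injective lab) : n + 1 ≤ 2 := by
  have : Function.Injective (fun i : Fin (n+1) => (⟨lab i, hlt i⟩ : Fin 2)) := by
    intro i j hij
    exact hinj (by simpa using congrArg Fin.val hij)
  simpa using Fintype.card_le_of_injective _ this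

lemma pathsF_card_le {t : DTree 2} (hwf : t.wf) (hdet : t.det) :
    ∀ h : ℕ, (∀ p ∈ t.pathsF, p.1.length ≤ h) → t.pathsF.card ≤ 2 ^ h := by
  induction t with
  | leaf d => intro h _; simpa [pathsF] using Nat.one_le_two_pow
  | node a n lab ch ih =>
    intro h hlen
    -- there is a path, and it has length ≥ 1; so h ≥ 1
    obtain ⟨p0, hp0⟩ := (ch 0).pathsF.nonempty_of_ne_empty (by
      intro hemp
      have := (coe_pathsF (ch 0)) ▸ (ch 0).paths_nonempty
      rw [hemp] at this; simpa using this)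
    have hp0' : ((a, lab 0) :: p0.1, p0.2) ∈ (DTree.node a n lab ch).pathsF := by
      simp only [pathsF, Finset.mem_biUnion, Finset.mem_univ, Finset.mem_image]
      exact ⟨0, trivial, p0, hp0, rfl⟩
    have hh : 1 ≤ h := le_trans (by simp) (hlen _ hp0')
    obtain ⟨h', rfl⟩ := Nat.exists_eq_add_of_le hh
    have hn2 : n + 1 ≤ 2 := nonroot_le_two hwf.1 hdet.1
    calc (DTree.node a n lab ch).pathsF.card
        ≤ ∑ i : Fin (n+1), ((pathsF (ch i)).image (fun p => ((a, lab i) :: p.1, p.2))).card :=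
          Finset.card_biUnion_le
      _ ≤ ∑ i : Fin (n+1), 2 ^ h' := by
          refine Finset.sum_le_sum fun i _ => ?_
          refine le_trans Finset.card_image_le (ih i (hwf.2 i) (hdet.2 i) h' ?_)
          intro p hp
          have : ((a, lab i) :: p.1, p.2) ∈ (DTree.node a n lab ch).pathsF := by
            simp only [pathsF, Finset.mem_biUnion, Finset.mem_univ, Finset.mem_image]
            exact ⟨i, trivial, p, hp, rfl⟩
          have h2 := hlen _ this
          simp only [List.length_cons] at h2
          omega
      _ = (n + 1) * 2 ^ h' := by simp [Finset.sum_const, mul_comm]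
      _ ≤ 2 * 2 ^ h' := Nat.mul_le_mul_right _ hn2
      _ = 2 ^ (1 + h') := by rw [pow_add, pow_one]

end DTree

end Aux
noncomputable section Aux2
open Classical

/-- the decision condition: `i` marks the position of a "last 1" pattern in the row -/
def gcond (l : List ℕ) (r : ℕ → ℕ) (i : ℕ) : Prop :=
  (i = 0 ∧ r (l.getD 0 0) = 0) ∨
  (1 ≤ i ∧ i < l.length ∧ r (l.getD (i-1) 0) = 1 ∧ r (l.getD i 0) = 0) ∨
  (i = l.length ∧ 1 ≤ l.length ∧ r (l.getD (l.length - 1) 0) = 1)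

def gdec (l : List ℕ) (r : ℕ → ℕ) : Finset ℕ :=
  (Finset.range (l.length + 1)).filter fun i => gcond l r i

/-- the certificate word for decision `i` -/
def certW (l : List ℕ) (i : ℕ) : List (ℕ × ℕ) :=
  if i = 0 then [(l.getD 0 0, 0)]
  else if i = l.length then [(l.getD (l.length - 1) 0, 1)]
  else [(l.getD (i-1) 0, 1), (l.getD i 0, 0)]

lemma gcond_of_certW {l : List ℕ} {r : ℕ → ℕ} {i : ℕ} (hl : 1 ≤ l.length)
    (hi : i ≤ l.length) (hsat : Table.rowSat r (certW l i)) : gcond l r i := by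
  rcases Nat.eq_zero_or_pos i with h0 | h0
  · subst h0
    rw [certW, if_pos rfl] at hsat
    exact Or.inl ⟨rfl, hsat (_, 0) (List.mem_singleton_self _)⟩
  · rcases eq_or_lt_of_le hi with hm | hm
    · rw [certW, if_neg (by omega), if_pos hm] at hsat
      exact Or.inr (Or.inr ⟨hm, hl, hsat (_, 1) (List.mem_singleton_self _)⟩)
    · rw [certW, if_neg (by omega), if_neg (by omega)] at hsat
      exact Or.inr (Or.inl ⟨h0, hm, hsat (_, 1) List.mem_cons_self,
        hsat (_, 0) (List.mem_cons_of_mem _ (List.mem_singleton_self _))⟩)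

lemma mem_gdec_of_certW {l : List ℕ} {r : ℕ → ℕ} {i : ℕ} (hl : 1 ≤ l.length)
    (hi : i ≤ l.length) (hsat : Table.rowSat r (certW l i)) : i ∈ gdec l r := by
  exact Finset.mem_filter.mpr ⟨Finset.mem_range.mpr (by omega), gcond_of_certW hl hi hsat⟩

lemma getD_mem {l : List ℕ} {t : ℕ} (ht : t < l.length) : l.getD t 0 ∈ l := by
  rw [List.getD_eq_getElem l 0 ht]; exact List.getElem_mem ht

/-- every 0/1-valued row satisfies some certificate -/
lemma exists_certW {l : List ℕ} (hl : 1 ≤ l.length) {r : ℕ → ℕ}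
    (hr : ∀ a ∈ l, r a < 2) : ∃ i ≤ l.length, Table.rowSat r (certW l i) := by
  by_cases h0 : r (l.getD 0 0) = 0
  · refine ⟨0, Nat.zero_le _, ?_⟩
    intro q hq
    rw [certW, if_pos rfl, List.mem_singleton] at hq
    subst hq; exact h0
  · have h1 : r (l.getD 0 0) = 1 := by
      have := hr _ (getD_mem (t := 0) (by omega)); omega
    set P : ℕ → Prop := fun j => r (l.getD j 0) = 1 with hP
    set j := Nat.findGreatest P (l.length - 1) with hj
    have hPj : P j := Nat.findGreatest_spec (Nat.zero_le _) h1
    have hjle : j ≤ l.length - 1 := Nat.findGreatest_le _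
    rcases eq_or_lt_of_le hjle with hjm | hjm
    · refine ⟨l.length, le_rfl, ?_⟩
      intro q hq
      rw [certW, if_neg (by omega), if_pos rfl, List.mem_singleton] at hq
      subst hq
      show r (l.getD (l.length - 1) 0) = 1
      rw [← hjm]; exact hPj
    · have hnP : ¬ P (j + 1) := Nat.findGreatest_is_greatest (n := l.length - 1) (by omega) (by omega)
      have hz : r (l.getD (j+1) 0) = 0 := by
        have := hr _ (getD_mem (show j + 1 < l.length by omega))
        simp only [hP] at hnP; omega
      refine ⟨j + 1, by omega, ?_⟩
      intro q hq
      rw [certW, if_neg (by omega), if_neg (by omega)] at hq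
      simp only [Nat.add_sub_cancel, List.mem_cons, List.not_mem_nil, or_false] at hq
      rcases hq with rfl | rfl
      · exact hPj
      · exact hz

end Aux2
noncomputable section Aux3
open Classical

/-- the gadget table: same attributes and rows as `Q`, decisions given by `gdec` -/
def gTable (Q : Table 2) : Table 2 where
  attrs := Q.attrs
  rows := Q.rows
  dec := fun r => if (gdec (Q.attrs.sort (· ≤ ·)) r).Nonempty
      then gdec (Q.attrs.sort (· ≤ ·)) r else {0}
  rows_mem := Q.rows_mem
  dec_nonempty := by
    intro r _
    by_cases h : (gdec (Q.attrs.sort (· ≤ ·)) r).Nonempty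
    · simp only [if_pos h]; exact h
    · simp only [if_neg h]; exact ⟨0, Finset.mem_singleton_self 0⟩

lemma gTable_mem_closure (Q : Table 2) : gTable Q ∈ Table.closureT Q := by
  refine ⟨∅, Finset.empty_subset _, by simp [gTable], ?_⟩
  show Q.rows = Q.rows.image _
  rw [Finset.image_congr (g := id), Finset.image_id]
  intro r hr
  funext i
  simp only [Finset.sdiff_empty, id]
  by_cases hi : i ∈ Q.attrs
  · simp [hi]
  · simp [hi, (Q.rows_mem r hr).2 i hi]

lemma gTable_dec_eq {Q : Table 2} {r : ℕ → ℕ} {i : ℕ}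
    (hi : i ∈ gdec (Q.attrs.sort (· ≤ ·)) r) : (gTable Q).dec r = gdec (Q.attrs.sort (· ≤ ·)) r := by
  simp only [gTable]
  exact if_pos ⟨i, hi⟩

lemma mem_allRows {k : ℕ} {s : Finset ℕ} {r : ℕ → ℕ} (h1 : ∀ i ∈ s, r i < k)
    (h2 : ∀ i ∉ s, r i = 0) : r ∈ allRows k s := by
  refine Finset.mem_image.mpr ⟨fun i _ => r i, ?_, ?_⟩
  · exact Finset.mem_pi.mpr fun i hi => Finset.mem_range.mpr (h1 i hi)
  · funext i
    by_cases hi : i ∈ s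
    · simp [hi]
    · simp [hi, h2 i hi]

lemma allRows_card_le {k : ℕ} (s : Finset ℕ) : (allRows k s).card ≤ k ^ s.card := by
  refine le_trans Finset.card_image_le ?_
  rw [Finset.card_pi]
  simp

/-- a complete table consists of all valid rows -/
lemma rows_eq_allRows {Q : Table 2} (hc : isComplete Q) : Q.rows = allRows 2 Q.attrs := by
  refine Finset.eq_of_subset_of_card_le ?_ ?_
  · intro r hr
    exact mem_allRows (Q.rows_mem r hr).1 (Q.rows_mem r hr).2
  · calc (allRows 2 Q.attrs).card ≤ 2 ^ Q.attrs.card := allRows_card_le _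
      _ = Q.rows.card := hc.symm

/-- the prefix row: value 1 exactly on the first `j` attributes -/
def prefixRow (l : List ℕ) (j : ℕ) : ℕ → ℕ := fun a => if a ∈ l.take j then 1 else 0

lemma prefixRow_getD {l : List ℕ} (hnd : l.Nodup) {j t : ℕ} (ht : t < l.length) :
    prefixRow l j (l.getD t 0) = if t < j then 1 else 0 := by
  rw [List.getD_eq_getElem l 0 ht]
  unfold prefixRow
  by_cases htj : t < j
  · rw [if_pos, if_pos htj]
    exact List.mem_take_iff_getElem.mpr ⟨t, by omega, by simp⟩
  · rw [if_neg, if_neg htj]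
    intro hmem
    obtain ⟨u, hu, hequ⟩ := List.mem_take_iff_getElem.mp hmem
    have : u < l.length := lt_of_lt_of_le (lt_min_iff.mp hu).2 le_rfl
    have := List.Nodup.getElem_inj_iff hnd |>.mp hequ
    omega

lemma gdec_prefixRow {l : List ℕ} (hnd : l.Nodup) {j : ℕ} (hj1 : 1 ≤ j) (hjm : j ≤ l.length) :
    gdec l (prefixRow l j) = {j} := by
  have hl : 1 ≤ l.length := le_trans hj1 hjm
  ext i
  simp only [gdec, Finset.mem_filter, Finset.mem_range, Finset.mem_singleton]
  constructor
  · rintro ⟨hir, hc⟩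
    rcases hc with ⟨h0, hv⟩ | ⟨h1, him, hv1, hv0⟩ | ⟨him, -, hv⟩
    · rw [prefixRow_getD hnd (by omega)] at hv
      rw [if_pos (by omega)] at hv
      omega
    · rw [prefixRow_getD hnd (by omega)] at hv1
      rw [prefixRow_getD hnd (by omega)] at hv0
      split at hv1 <;> split at hv0 <;> omega
    · rw [prefixRow_getD hnd (by omega)] at hv
      split at hv <;> omega
  · rintro rfl
    refine ⟨by omega, ?_⟩
    rcases eq_or_lt_of_le hjm with hm | hm
    · refine Or.inr (Or.inr ⟨hm, hl, ?_⟩)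
      rw [prefixRow_getD hnd (by omega), if_pos (by omega)]
    · refine Or.inr (Or.inl ⟨hj1, hm, ?_, ?_⟩)
      · rw [prefixRow_getD hnd (by omega), if_pos (by omega)]
      · rw [prefixRow_getD hnd (by omega), if_neg (by omega)]

end Aux3
noncomputable section Aux4
open Classical

lemma nat_sSup_le {s : Set ℕ} {b : ℕ} (h : ∀ c ∈ s, c ≤ b) : sSup s ≤ b := by
  rcases s.eq_empty_or_nonempty with rfl | hne
  · simp
  · exact csSup_le hne h

lemma nat_le_sSup {s : Set ℕ} {c : ℕ} (hb : BddAbove s) (hc : c ∈ s) : c ≤ sSup s :=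
  le_csSup hb hc

/-- the single-path tree testing the certificate `certW l i` -/
def certTree (l : List ℕ) (i : ℕ) : DTree 2 :=
  if i = 0 then .node (l.getD 0 0) 0 (fun _ => 0) (fun _ => .leaf 0)
  else if i = l.length then .node (l.getD (l.length - 1) 0) 0 (fun _ => 1) (fun _ => .leaf l.length)
  else .node (l.getD (i-1) 0) 0 (fun _ => 1)
        (fun _ => .node (l.getD i 0) 0 (fun _ => 0) (fun _ => .leaf i))

lemma paths_node0 {k : ℕ} (a : ℕ) (lab : Fin 1 → ℕ) (ch : Fin 1 → DTree k) :
    (DTree.node a 0 lab ch).paths =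
      (fun p : List (ℕ × ℕ) × ℕ => ((a, lab 0) :: p.1, p.2)) '' (ch 0).paths := by
  show (⋃ i, _) = _
  ext p
  simp only [Set.mem_iUnion]
  constructor
  · rintro ⟨i, hi⟩
    have : i = 0 := Fin.fin_one_eq_zero i
    subst this; exact hi
  · exact fun h => ⟨0, h⟩

lemma certTree_paths (l : List ℕ) (i : ℕ) :
    (certTree l i).paths = {(certW l i, i)} := by
  unfold certTree certW
  by_cases h0 : i = 0
  · subst h0
    rw [if_pos rfl, if_pos rfl, paths_node0]
    simp [DTree.paths]
  · by_cases hm : i = l.length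
    · rw [if_neg h0, if_pos hm, if_neg h0, if_pos hm, paths_node0]
      simp [DTree.paths, hm]
    · rw [if_neg h0, if_neg hm, if_neg h0, if_neg hm, paths_node0, paths_node0]
      simp [DTree.paths]

lemma certTree_wf (l : List ℕ) (i : ℕ) : (certTree l i).wf := by
  unfold certTree
  split
  · exact ⟨fun _ => by norm_num, fun _ => trivial⟩
  split
  · exact ⟨fun _ => by norm_num, fun _ => trivial⟩
  · exact ⟨fun _ => by norm_num, fun _ => ⟨fun _ => by norm_num, fun _ => trivial⟩⟩

lemma attrs_leaf {k : ℕ} (d : ℕ) : (DTree.leaf d : DTree k).attrs = ∅ := rfl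

lemma attrs_node0 {k : ℕ} (a : ℕ) (lab : Fin 1 → ℕ) (ch : Fin 1 → DTree k) :
    (DTree.node a 0 lab ch).attrs = insert a (ch 0).attrs := by
  show insert a _ = _
  congr 1
  ext x
  simp only [Finset.mem_biUnion, Finset.mem_univ, true_and]
  constructor
  · rintro ⟨i, hi⟩
    have : i = 0 := Fin.fin_one_eq_zero i
    subst this; exact hi
  · exact fun h => ⟨0, h⟩

lemma certTree_attrs {l : List ℕ} {i : ℕ} (hl : 1 ≤ l.length) (hi : i ≤ l.length) {s : Finset ℕ}
    (hls : ∀ a ∈ l, a ∈ s) : (certTree l i).attrs ⊆ s := by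
  unfold certTree
  have h1 : l.getD 0 0 ∈ s := hls _ (getD_mem (by omega))
  have h2 : l.getD (l.length - 1) 0 ∈ s := hls _ (getD_mem (by omega))
  split
  · rw [attrs_node0, attrs_leaf]
    intro x hx
    rcases Finset.mem_insert.mp hx with rfl | hx
    · exact h1
    · exact absurd hx (Finset.notMem_empty x)
  split
  · rw [attrs_node0, attrs_leaf]
    intro x hx
    rcases Finset.mem_insert.mp hx with rfl | hx
    · exact h2
    · exact absurd hx (Finset.notMem_empty x)
  · rename_i h0 hm
    have h3 : l.getD (i - 1) 0 ∈ s := hls _ (getD_mem (by omega))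
    have h4 : l.getD i 0 ∈ s := hls _ (getD_mem (by omega))
    rw [attrs_node0, attrs_node0, attrs_leaf]
    intro x hx
    rcases Finset.mem_insert.mp hx with rfl | hx
    · exact h3
    rcases Finset.mem_insert.mp hx with rfl | hx
    · exact h4
    · exact absurd hx (Finset.notMem_empty x)

/-- the nondeterministic tree consisting of all certificates -/
def certKTree (l : List ℕ) : KTree 2 where
  n := l.length
  sub := fun i => certTree l i.val

lemma certKTree_paths (l : List ℕ) :
    (certKTree l).paths = ⋃ i : Fin (l.length + 1), {(certW l i.val, i.val)} := by
  unfold KTree.paths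
  exact Set.iUnion_congr fun i => certTree_paths l i.val

lemma certKTree_isNDT {Q : Table 2} (hl : 1 ≤ Q.attrs.card) (hne : Q.rows.Nonempty) :
    isNDT (gTable Q) (certKTree (Q.attrs.sort (· ≤ ·))) := by
  set l := Q.attrs.sort (· ≤ ·) with hldef
  have hlen : l.length = Q.attrs.card := Finset.length_sort _
  have hmem : ∀ a ∈ l, a ∈ Q.attrs := fun a ha => (Finset.mem_sort _).mp ha
  have hl1 : 1 ≤ l.length := by omega
  refine ⟨hne, ?_, ?_, ?_, ?_⟩
  · intro i; exact certTree_wf l i.val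
  · intro x hx
    simp only [KTree.attrs, Finset.mem_biUnion, Finset.mem_univ, true_and] at hx
    obtain ⟨i, hi⟩ := hx
    exact certTree_attrs hl1 (by omega) hmem hi
  · intro r hr
    have hv : ∀ a ∈ l, r a < 2 := fun a ha => ((gTable Q).rows_mem r hr).1 a (hmem a ha)
    obtain ⟨i, hi, hsat⟩ := exists_certW hl1 hv
    refine ⟨(certW l i, i), ?_, hsat⟩
    rw [certKTree_paths]
    exact Set.mem_iUnion.mpr ⟨⟨i, by omega⟩, rfl⟩
  · intro p hp
    rw [certKTree_paths] at hp
    obtain ⟨i, hi⟩ := Set.mem_iUnion.mp hp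
    rw [Set.mem_singleton_iff] at hi
    subst hi
    right
    intro r hr
    rw [Table.applyWord, Finset.mem_filter] at hr
    have hi' : (i : ℕ) ∈ gdec l r := mem_gdec_of_certW hl1 (by omega) hr.2
    rw [gTable_dec_eq hi']
    exact hi'

lemma certKTree_comp_le {Q : Table 2} (ψ : PBCM) {n : ℕ} (hl : 1 ≤ Q.attrs.card)
    (hψ : ∀ a ∈ Q.attrs, ψ.toFun [a] ≤ n) :
    treeComp ψ (certKTree (Q.attrs.sort (· ≤ ·))) ≤ 2 * n := by
  set l := Q.attrs.sort (· ≤ ·) with hldef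
  have hmem : ∀ a ∈ l, a ∈ Q.attrs := fun a ha => (Finset.mem_sort _).mp ha
  have hlen : l.length = Q.attrs.card := Finset.length_sort _
  refine nat_sSup_le ?_
  rintro c ⟨p, hp, rfl⟩
  rw [certKTree_paths] at hp
  obtain ⟨i, hi⟩ := Set.mem_iUnion.mp hp
  rw [Set.mem_singleton_iff] at hi
  subst hi
  have hone : ∀ t, t < l.length → ψ.onWord [(l.getD t 0, (0:ℕ))] ≤ 2 * n ∧
      ψ.onWord [(l.getD t 0, (1:ℕ))] ≤ 2 * n := by
    intro t ht
    have := hψ _ (hmem _ (getD_mem ht))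
    constructor <;> · show ψ.toFun [l.getD t 0] ≤ 2 * n; omega
  show ψ.onWord (certW l i.val) ≤ 2 * n
  unfold certW
  by_cases h0 : (i : ℕ) = 0
  · rw [if_pos h0]
    exact (hone 0 (by omega)).1
  by_cases hm : (i : ℕ) = l.length
  · rw [if_neg h0, if_pos hm]
    exact (hone _ (by omega)).2
  · rw [if_neg h0, if_neg hm]
    have hi1 := (hone (i.val - 1) (by omega)).2
    have hi2 := (hone i.val (by have := i.2; omega)).1
    calc ψ.onWord [(l.getD (i.val-1) 0, 1), (l.getD i.val 0, 0)]
        = ψ.toFun ([l.getD (i.val-1) 0] ++ [l.getD i.val 0]) := rfl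
      _ ≤ ψ.toFun [l.getD (i.val-1) 0] + ψ.toFun [l.getD i.val 0] := ψ.subadd _ _
      _ ≤ 2 * n := by
          have h1 : ψ.toFun [l.getD (i.val-1) 0] ≤ n := hψ _ (hmem _ (getD_mem (by omega)))
          have h2 : ψ.toFun [l.getD i.val 0] ≤ n := hψ _ (hmem _ (getD_mem (by have := i.2; omega)))
          omega

end Aux4
noncomputable section Aux5
open Classical

def leafDec (T : Table 2) (β : List (ℕ × ℕ)) : ℕ :=
  if h : ∃ r ∈ T.rows, Table.rowSat r β then sInf ↑(T.dec h.choose) else 0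

def dtFull (T : Table 2) : List ℕ → List (ℕ × ℕ) → DTree 2
  | [], β => .leaf (leafDec T β)
  | a :: as, β => .node a 1 (fun i => i.val) (fun i => dtFull T as (β ++ [(a, i.val)]))

lemma dtFull_wf (T : Table 2) : ∀ (as : List ℕ) (β : List (ℕ × ℕ)), (dtFull T as β).wf := by
  intro as
  induction as with
  | nil => intro β; trivial
  | cons a as ih => exact fun β => ⟨fun i => i.2, fun i => ih _⟩

lemma dtFull_det (T : Table 2) : ∀ (as : List ℕ) (β : List (ℕ × ℕ)), (dtFull T as β).det := by
  intro as
  induction as with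
  | nil => intro β; trivial
  | cons a as ih =>
    exact fun β => ⟨fun i j hij => Fin.ext hij, fun i => ih _⟩

lemma dtFull_attrs (T : Table 2) : ∀ (as : List ℕ) (β : List (ℕ × ℕ)),
    (dtFull T as β).attrs ⊆ as.toFinset := by
  intro as
  induction as with
  | nil => intro β x hx; exact absurd hx (Finset.notMem_empty x)
  | cons a as ih =>
    intro β x hx
    show x ∈ (a :: as).toFinset
    rw [List.toFinset_cons]
    obtain hx | hx := Finset.mem_insert.mp hx
    · exact Finset.mem_insert.mpr (Or.inl hx)
    · obtain ⟨i, -, hi⟩ := Finset.mem_biUnion.mp hx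
      exact Finset.mem_insert.mpr (Or.inr (ih _ hi))

lemma dtFull_paths (T : Table 2) : ∀ (as : List ℕ) (β : List (ℕ × ℕ)),
    ∀ p ∈ (dtFull T as β).paths,
      p.1.map Prod.fst = as ∧ p.2 = leafDec T (β ++ p.1) ∧ ∀ q ∈ p.1, q.2 < 2 := by
  intro as
  induction as with
  | nil =>
    intro β p hp
    rw [show (dtFull T [] β).paths = {([], leafDec T β)} from rfl, Set.mem_singleton_iff] at hp
    subst hp
    exact ⟨rfl, by simp, by simp⟩
  | cons a as ih =>
    intro β p hp
    obtain ⟨i, hi⟩ := Set.mem_iUnion.mp hp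
    obtain ⟨p', hp', rfl⟩ := hi
    obtain ⟨h1, h2, h3⟩ := ih (β ++ [(a, i.val)]) p' hp'
    refine ⟨by simp [h1], ?_, ?_⟩
    · rw [h2]
      congr 1
      simp
    · intro q hq
      rcases List.mem_cons.mp hq with rfl | hq
      · exact i.2
      · exact h3 q hq

lemma dtFull_cover (T : Table 2) : ∀ (as : List ℕ) (β : List (ℕ × ℕ)) (r : ℕ → ℕ),
    (∀ a ∈ as, r a < 2) → ∃ p ∈ (dtFull T as β).paths, Table.rowSat r p.1 := by
  intro as
  induction as with
  | nil =>
    intro β r _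
    exact ⟨([], leafDec T β), rfl, fun q hq => absurd hq List.not_mem_nil⟩
  | cons a as ih =>
    intro β r hr
    obtain ⟨p', hp', hsat'⟩ := ih (β ++ [(a, r a)]) r (fun x hx => hr x (List.mem_cons_of_mem _ hx))
    refine ⟨((a, r a) :: p'.1, p'.2), ?_, ?_⟩
    · refine Set.mem_iUnion.mpr ⟨⟨r a, hr a List.mem_cons_self⟩, ?_⟩
      exact ⟨p', hp', rfl⟩
    · intro q hq
      rcases List.mem_cons.mp hq with rfl | hq
      · rfl
      · exact hsat' q hq

/-- rows of a table agreeing on a word that mentions all attributes are equal -/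
lemma row_eq_of_sat {T : Table 2} {r r' : ℕ → ℕ} (hr : r ∈ T.rows) (hr' : r' ∈ T.rows)
    {β : List (ℕ × ℕ)} (hcov : ∀ a ∈ T.attrs, a ∈ β.map Prod.fst)
    (h1 : Table.rowSat r β) (h2 : Table.rowSat r' β) : r = r' := by
  funext a
  by_cases ha : a ∈ T.attrs
  · obtain ⟨q, hq, hqa⟩ := List.mem_map.mp (hcov a ha)
    subst hqa
    rw [h1 q hq, h2 q hq]
  · rw [(T.rows_mem r hr).2 a ha, (T.rows_mem r' hr').2 a ha]

def fullKTree (T : Table 2) : KTree 2 := ⟨0, fun _ => dtFull T (T.attrs.sort (· ≤ ·)) []⟩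

lemma fullKTree_isDDT (T : Table 2) (hne : T.rows.Nonempty) : isDDT T (fullKTree T) := by
  set l := T.attrs.sort (· ≤ ·) with hldef
  have hmem : ∀ a ∈ l, a ∈ T.attrs := fun a ha => (Finset.mem_sort _).mp ha
  have hmem' : ∀ a ∈ T.attrs, a ∈ l := fun a ha => (Finset.mem_sort _).mpr ha
  refine ⟨⟨hne, fun _ => dtFull_wf T l [], ?_, ?_, ?_⟩, rfl, fun _ => dtFull_det T l []⟩
  · intro x hx
    obtain ⟨i, -, hi⟩ := Finset.mem_biUnion.mp hx
    exact hmem x (List.mem_toFinset.mp (dtFull_attrs T l [] hi))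
  · intro r hr
    have hv : ∀ a ∈ l, r a < 2 := fun a ha => (T.rows_mem r hr).1 a (hmem a ha)
    obtain ⟨p, hp, hsat⟩ := dtFull_cover T l [] r hv
    exact ⟨p, Set.mem_iUnion.mpr ⟨0, hp⟩, hsat⟩
  · intro p hp
    obtain ⟨i, hi⟩ := Set.mem_iUnion.mp hp
    obtain ⟨hmap, hdec, -⟩ := dtFull_paths T l [] p hi
    rw [List.nil_append] at hdec
    by_cases hemp : (T.applyWord p.1).rows = ∅
    · exact Or.inl hemp
    right
    intro r hr
    rw [Table.applyWord, Finset.mem_filter] at hr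
    have hex : ∃ r' ∈ T.rows, Table.rowSat r' p.1 := ⟨r, hr.1, hr.2⟩
    have hcov : ∀ a ∈ T.attrs, a ∈ p.1.map Prod.fst := by
      intro a ha; rw [hmap]; exact hmem' a ha
    have hreq : r = hex.choose :=
      row_eq_of_sat hr.1 hex.choose_spec.1 hcov hr.2 hex.choose_spec.2
    rw [hdec, leafDec, dif_pos hex, ← hreq]
    exact Finset.mem_coe.mp (Nat.sInf_mem (Finset.coe_nonempty.mpr (T.dec_nonempty r hr.1)))

lemma exists_psiD (ψ : PBCM) (T : Table 2) (hne : T.rows.Nonempty) :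
    ∃ Γ : KTree 2, isDDT T Γ ∧ treeComp ψ Γ = psiD ψ T := by
  have hmem : psiD ψ T ∈ {c | ∃ Γ : KTree 2, isDDT T Γ ∧ treeComp ψ Γ = c} :=
    Nat.sInf_mem ⟨_, _, fullKTree_isDDT T hne, rfl⟩
  exact hmem

end Aux5
noncomputable section Aux6
open Classical

lemma KTree_paths_finite (Γ : KTree 2) : Γ.paths.Finite :=
  Set.finite_iUnion fun i => (Γ.sub i).paths_finite

lemma treeComp_bound {ψ : PBCM} {Γ : KTree 2} {p : List (ℕ × ℕ) × ℕ} (hp : p ∈ Γ.paths) :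
    ψ.onWord p.1 ≤ treeComp ψ Γ := by
  refine nat_le_sSup ?_ ⟨p, hp, rfl⟩
  have : {c | ∃ p ∈ Γ.paths, ψ.onWord p.1 = c} = (fun p => ψ.onWord p.1) '' Γ.paths := by
    ext c; simp [Set.mem_image]
  rw [this]
  exact ((KTree_paths_finite Γ).image _).bddAbove

lemma psiD_lower {Q : Table 2} (ψ : BCM) (hc : isComplete Q) (hl : 1 ≤ Q.attrs.card)
    (hne : Q.rows.Nonempty) : Q.attrs.card ≤ 2 ^ psiD ψ.toPBCM (gTable Q) := by
  classical
  set l := Q.attrs.sort (· ≤ ·) with hldef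
  have hlen : l.length = Q.attrs.card := Finset.length_sort _
  have hnd : l.Nodup := Q.attrs.sort_nodup _
  set U := gTable Q with hUdef
  have hUrows : U.rows = Q.rows := rfl
  obtain ⟨Γ, hΓ, hcomp⟩ := exists_psiD ψ.toPBCM U hne
  obtain ⟨⟨-, hwf, -, hcover, hcorrect⟩, hn0, hdet⟩ := hΓ
  set H := psiD ψ.toPBCM U with hH
  -- every path has word length at most H
  have hlenb : ∀ p ∈ Γ.paths, p.1.length ≤ H := by
    intro p hp
    have h1 := treeComp_bound (ψ := ψ.toPBCM) hp
    rw [hcomp] at h1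
    have h2 : p.1.length ≤ ψ.toFun (p.1.map Prod.fst) := by
      have := ψ.bdd (p.1.map Prod.fst)
      simpa using this
    exact le_trans h2 h1
  -- prefix rows are rows of U
  have hprefix : ∀ j, 1 ≤ j → j ≤ Q.attrs.card → prefixRow l j ∈ U.rows := by
    intro j h1 h2
    rw [hUrows, rows_eq_allRows hc]
    refine mem_allRows (fun i _ => ?_) (fun i hi => ?_)
    · unfold prefixRow; split <;> omega
    · unfold prefixRow
      rw [if_neg]
      intro hmem
      exact hi ((Finset.mem_sort _).mp (List.take_subset _ _ hmem))
  -- the chosen path for each prefix row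
  have hpath : ∀ j, 1 ≤ j → j ≤ Q.attrs.card →
      ∃ p ∈ Γ.paths, Table.rowSat (prefixRow l j) p.1 ∧ p.2 = j := by
    intro j h1 h2
    obtain ⟨p, hp, hsat⟩ := hcover _ (hprefix j h1 h2)
    refine ⟨p, hp, hsat, ?_⟩
    rcases hcorrect p hp with hemp | hcom
    · exfalso
      have : prefixRow l j ∈ (U.applyWord p.1).rows :=
        Finset.mem_filter.mpr ⟨hprefix j h1 h2, hsat⟩
      rw [hemp] at this
      exact absurd this (Finset.notMem_empty _)
    · have hmem := hcom _ (Finset.mem_filter.mpr ⟨hprefix j h1 h2, hsat⟩)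
      have hgd : gdec l (prefixRow l j) = {j} := gdec_prefixRow hnd h1 (by omega)
      have : U.dec (prefixRow l j) = {j} := by
        rw [hUdef, gTable_dec_eq (i := j), ← hldef, hgd]
        rw [← hldef, hgd]
        exact Finset.mem_singleton_self j
      rw [this, Finset.mem_singleton] at hmem
      exact hmem
  choose! F hF1 hF2 hF3 using hpath
  -- count paths
  set PF : Finset (List (ℕ × ℕ) × ℕ) := Finset.univ.biUnion fun i => (Γ.sub i).pathsF with hPF
  have hsubPF : ∀ p ∈ Γ.paths, p ∈ PF := by
    intro p hp
    obtain ⟨i, hi⟩ := Set.mem_iUnion.mp hp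
    refine Finset.mem_biUnion.mpr ⟨i, Finset.mem_univ i, ?_⟩
    rw [← Finset.mem_coe, DTree.coe_pathsF]
    exact hi
  have hcard : Q.attrs.card ≤ PF.card := by
    have := Finset.card_le_card_of_injOn F (s := Finset.Icc 1 Q.attrs.card) (t := PF) (fun j hj => by
        rw [Finset.mem_coe, Finset.mem_Icc] at hj
        exact hsubPF _ (hF1 j hj.1 hj.2))
      (fun j1 hj1 j2 hj2 heq => by
        rw [Finset.mem_coe, Finset.mem_Icc] at hj1 hj2
        have e1 := hF3 j1 hj1.1 hj1.2
        have e2 := hF3 j2 hj2.1 hj2.2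
        rw [← e1, ← e2, heq])
    simpa using this
  have hPFcard : PF.card ≤ 2 ^ H := by
    calc PF.card ≤ ∑ i : Fin (Γ.n + 1), (Γ.sub i).pathsF.card := Finset.card_biUnion_le
      _ ≤ ∑ _i : Fin (Γ.n + 1), 2 ^ H := by
          refine Finset.sum_le_sum fun i _ => ?_
          refine DTree.pathsF_card_le (hwf i) (hdet i) H ?_
          intro p hp
          refine hlenb p (Set.mem_iUnion.mpr ⟨i, ?_⟩)
          rw [← DTree.coe_pathsF]
          exact hp
      _ = (Γ.n + 1) * 2 ^ H := by simp [mul_comm]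
      _ = 2 ^ H := by rw [hn0]; ring
  omega

end Aux6
/-- **Lemma (7M8).** If `Z_{ψ,A}` is not everywhere defined, then `H^∞_{ψ,A}` is not
everywhere defined. -/
theorem stmt14 (A : Set (Table 2)) (hclosed : IsClosedClass A)
    (hnontriv : NontrivialClass A) (ψ : BCM)
    (hZ : ¬ ∀ n, (ZSet ψ.toPBCM A n).Finite) :
    ¬ ∀ n, (HSet ψ.toPBCM A n).Finite := by
  intro hH
  obtain ⟨n, hn⟩ := not_forall.mp hZ
  have hinf : (ZSet ψ.toPBCM A n).Infinite := hn
  -- the H set at level 2n is finite, hence bounded above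
  obtain ⟨b, hb⟩ := (hH (2 * n)).bddAbove
  -- get a table in A whose closure contains a complete table with more than 2^b columns
  obtain ⟨c, hcZ, hcgt⟩ := hinf.exists_gt (2 ^ b)
  obtain ⟨T, hTA, hmT, hZt⟩ := hcZ
  -- extract the complete table
  set S : Set ℕ := {c | ∃ Q ∈ Table.closureT T, isComplete Q ∧ Q.WT = c} with hS
  have hSbdd : BddAbove S := by
    refine ⟨T.attrs.card, ?_⟩
    rintro x ⟨Q, ⟨D, hD, hattr, hrows⟩, -, rfl⟩
    unfold Table.WT
    split
    · exact Nat.zero_le _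
    · rw [hattr]
      exact Finset.card_le_card (Finset.sdiff_subset)
  have hSne : S.Nonempty := by
    by_contra hemp
    rw [Set.not_nonempty_iff_eq_empty] at hemp
    have : Zt T = 0 := by
      unfold Zt
      rw [← hS, hemp, csSup_empty]
      rfl
    rw [this] at hZt
    rw [← hZt] at hcgt
    exact Nat.not_lt_zero _ hcgt
  have hZmem : Zt T ∈ S := Nat.sSup_mem hSne hSbdd
  obtain ⟨Q, hQcl, hQc, hQW⟩ := hZmem
  have hQA : Q ∈ A := hclosed T hTA hQcl
  -- Q has c columns and is nonempty
  have hcpos : 0 < c := lt_of_le_of_lt (Nat.zero_le _) hcgt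
  have hQrne : Q.rows ≠ ∅ := by
    intro h
    rw [Table.WT, if_pos h, hZt] at hQW
    omega
  have hQcard : Q.attrs.card = c := by
    rw [Table.WT, if_neg hQrne, hZt] at hQW
    exact hQW
  have hQne : Q.rows.Nonempty := Finset.nonempty_of_ne_empty hQrne
  have hl : 1 ≤ Q.attrs.card := by omega
  -- attribute complexities are at most n
  have hTne : T.rows.Nonempty := by
    obtain ⟨D, hD, hattr, hrows⟩ := hQcl
    obtain ⟨r, hr⟩ := hQne
    rw [hrows] at hr
    obtain ⟨r', hr', -⟩ := Finset.mem_image.mp hr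
    exact ⟨r', hr'⟩
  have hψattr : ∀ a ∈ Q.attrs, ψ.toFun [a] ≤ n := by
    intro a ha
    have haT : a ∈ T.attrs := by
      obtain ⟨D, hD, hattr, -⟩ := hQcl
      rw [hattr] at ha
      exact Finset.mem_sdiff.mp ha |>.1
    have : mpsi ψ.toPBCM T = T.attrs.sup fun i => ψ.toFun [i] := by
      rw [mpsi, if_neg (Finset.nonempty_iff_ne_empty.mp hTne)]
    calc ψ.toFun [a] ≤ T.attrs.sup fun i => ψ.toFun [i] := Finset.le_sup (f := fun i => ψ.toFun [i]) haT
      _ ≤ n := this ▸ hmT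
  -- the gadget table
  set U := gTable Q with hU
  have hUA : U ∈ A := hclosed Q hQA (gTable_mem_closure Q)
  have hUne : U.rows.Nonempty := hQne
  -- ψ^a(U) ≤ 2n
  have hpsiA : psiA ψ.toPBCM U ≤ 2 * n := by
    refine le_trans (Nat.sInf_le ⟨certKTree (Q.attrs.sort (· ≤ ·)),
      certKTree_isNDT hl hQne, rfl⟩) ?_
    exact certKTree_comp_le ψ.toPBCM hl hψattr
  -- ψ^d(U) is in the H set at level 2n but exceeds b
  have hmemH : psiD ψ.toPBCM U ∈ HSet ψ.toPBCM A (2 * n) := ⟨U, hUA, hpsiA, rfl⟩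
  have hle : psiD ψ.toPBCM U ≤ b := hb hmemH
  have hlow : Q.attrs.card ≤ 2 ^ psiD ψ.toPBCM U := psiD_lower ψ hQc hl hQne
  have : 2 ^ b < 2 ^ psiD ψ.toPBCM U := by omega
  have := (Nat.pow_lt_pow_iff_right (by norm_num : 1 < 2)).mp this
  omega
end
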